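/- arXiv:1412.3931 — 4 statements merged into one kernel-verified Lean document; each statement's English description precedes it below -/
import Mathlib

section
/- The multivariate Krawtchouk polynomials Q_n(X;u), defined as the coefficients of w_1^{n_1}⋯w_{d-1}^{n_{d-1}} in G(x,w,u) = Π_{j=1}^d (1 + Σ_{l=1}^{d-1} w_l u_j^{(l)})^{x_j}, satisfy the orthogonality relation E[Q_m(X;u) Q_n(X;u)] = δ_{mn} · N!/(n_1!⋯n_{d-1}!(N-|n|)!) · Π_{l=1}^{d-1} a_l^{n_l} when X is multinomial(N,p), for |m|,|n| ≤ N. -/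
set_option maxHeartbeats 1000000 in
lemma kraw_one_var (c : ℕ → ℝ) (h : ∀ t : ℝ, HasSum (fun j => c j * t ^ j) 0) :
    ∀ j, c j = 0 := by
  have habs : Summable fun j => |c j| := by
    have := (h 1).summable
    simp only [one_pow, mul_one] at this
    exact summable_abs_iff.mpr this
  intro j
  induction j using Nat.strong_induction_on with
  | _ j ih =>
  by_contra hcj
  set M : ℝ := ∑' i, |c (i + (j+1))| with hM
  have hMsum : Summable fun i => |c (i + (j+1))| := habs.comp_injective (add_left_injective (j+1))
  have hM0 : 0 ≤ M := tsum_nonneg fun i => abs_nonneg _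
  have key : ∀ t : ℝ, |t| ≤ 1 → |c j| * |t| ^ j ≤ (M * |t|) * |t| ^ j := by
    intro t ht
    have hs := (h t).summable
    have heq := (h t).tsum_eq
    rw [← Summable.sum_add_tsum_nat_add (j+1) hs] at heq
    have hfin : ∑ i ∈ Finset.range (j+1), c i * t ^ i = c j * t ^ j := by
      rw [Finset.sum_range_succ]
      have hz : ∑ i ∈ Finset.range j, c i * t ^ i = 0 :=
        Finset.sum_eq_zero fun i hi => by rw [ih i (Finset.mem_range.1 hi), zero_mul]
      rw [hz, zero_add]
    rw [hfin] at heq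
    have h1 : c j * t ^ j = - ∑' i, c (i + (j+1)) * t ^ (i + (j+1)) := by linarith
    have hssub : Summable fun i => c (i + (j+1)) * t ^ (i + (j+1)) := by
      exact (summable_nat_add_iff (j+1)).mpr hs
    have habssub : Summable fun i => ‖c (i + (j+1)) * t ^ (i + (j+1))‖ :=
      summable_norm_iff.mpr hssub
    have h2 : |c j * t ^ j| ≤ ∑' i, ‖c (i + (j+1)) * t ^ (i + (j+1))‖ := by
      rw [h1, abs_neg]
      exact norm_tsum_le_tsum_norm habssub
    have h3 : ∑' i, ‖c (i + (j+1)) * t ^ (i + (j+1))‖ ≤ ∑' i, |c (i + (j+1))| * |t| ^ (j+1) := by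
      refine Summable.tsum_le_tsum (fun i => ?_) habssub (hMsum.mul_right _)
      rw [Real.norm_eq_abs, abs_mul, abs_pow]
      refine mul_le_mul_of_nonneg_left ?_ (abs_nonneg _)
      exact pow_le_pow_of_le_one (abs_nonneg t) ht (by omega)
    have h4 : ∑' i, |c (i + (j+1))| * |t| ^ (j+1) = M * |t| ^ (j+1) := tsum_mul_right
    have h5 : |c j * t ^ j| = |c j| * |t| ^ j := by rw [abs_mul, abs_pow]
    have : |c j| * |t| ^ j ≤ M * |t| ^ (j+1) := by
      rw [← h5]; exact h2.trans (h3.trans_eq h4)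
    calc |c j| * |t| ^ j ≤ M * |t| ^ (j+1) := this
      _ = (M * |t|) * |t| ^ j := by ring
  have hcj0 : 0 < |c j| := abs_pos.mpr hcj
  set ε : ℝ := min 1 (|c j| / (2 * (M + 1))) with hε
  have hε0 : 0 < ε := lt_min one_pos (by positivity)
  have hε1 : |ε| ≤ 1 := by rw [abs_of_pos hε0]; exact min_le_left _ _
  have := key ε hε1
  have hpow : 0 < |ε| ^ j := pow_pos (abs_pos.mpr hε0.ne') j
  have hle : |c j| ≤ M * |ε| := le_of_mul_le_mul_right this hpow
  have hεle : ε ≤ |c j| / (2 * (M + 1)) := min_le_right _ _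
  rw [abs_of_pos hε0] at hle
  have : M * ε ≤ M * (|c j| / (2 * (M + 1))) := mul_le_mul_of_nonneg_left hεle hM0
  have hfr : M * (|c j| / (2 * (M + 1))) < |c j| := by
    have h2M : M / (2 * (M + 1)) < 1 := by
      rw [div_lt_one (by positivity)]; linarith
    calc M * (|c j| / (2 * (M + 1))) = |c j| * (M / (2 * (M + 1))) := by ring
      _ < |c j| * 1 := by exact mul_lt_mul_of_pos_left h2M hcj0
      _ = |c j| := mul_one _
  linarith

lemma kraw_multi (k : ℕ) : ∀ (c : (Fin k → ℕ) → ℝ),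
    (∀ w : Fin k → ℝ, HasSum (fun n => c n * ∏ l, w l ^ n l) 0) → ∀ n, c n = 0 := by
  induction k with
  | zero =>
    intro c h n
    have h2 : HasSum (fun n : Fin 0 → ℕ => c n * ∏ l, (1:ℝ) ^ n l)
        (c n * ∏ l, (1:ℝ) ^ n l) :=
      hasSum_single n (fun b hb => absurd (Subsingleton.elim b n) hb)
    have := (h 1).unique h2
    simpa using this.symm
  | succ k ih =>
    intro c h n
    have hprod : ∀ (t : ℝ) (w' : Fin k → ℝ), HasSum (fun q : ℕ × (Fin k → ℕ) =>
        c (Fin.cons q.1 q.2) * (t ^ q.1 * ∏ l, w' l ^ q.2 l)) 0 := by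
      intro t w'
      have h0 := ((Fin.consEquiv (fun _ : Fin (k+1) => ℕ)).hasSum_iff).mpr
        (h (Fin.cons t w'))
      refine h0.congr_fun fun q => ?_
      show c (Fin.cons q.1 q.2) * (t ^ q.1 * ∏ l, w' l ^ q.2 l)
        = c (Fin.cons q.1 q.2) * ∏ l, (Fin.cons t w' : Fin (k+1) → ℝ) l ^ (Fin.cons q.1 q.2 : Fin (k+1) → ℕ) l
      rw [Fin.prod_univ_succ]
      simp [Fin.cons_zero, Fin.cons_succ]
    have hkey : ∀ (j : ℕ) (w' : Fin k → ℝ),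
        (∑' n' : Fin k → ℕ, c (Fin.cons j n') * ∏ l, w' l ^ n' l) = 0 := by
      intro j w'
      refine kraw_one_var (fun j => ∑' n' : Fin k → ℕ, c (Fin.cons j n') * ∏ l, w' l ^ n' l)
        (fun t => ?_) j
      refine HasSum.prod_fiberwise (hprod t w') fun jj => ?_
      have hfib : Summable fun n' : Fin k → ℕ =>
          c (Fin.cons jj n') * (t ^ jj * ∏ l, w' l ^ n' l) :=
        (hprod t w').summable.prod_factor jj
      have hre : (fun n' : Fin k → ℕ => c (Fin.cons jj n') * (t ^ jj * ∏ l, w' l ^ n' l))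
          = fun n' => t ^ jj * (c (Fin.cons jj n') * ∏ l, w' l ^ n' l) := by
        funext n'; ring
      rw [hre] at hfib
      have := hfib.hasSum
      rw [tsum_mul_left] at this
      have h2 : HasSum (fun n' : Fin k → ℕ => c (Fin.cons jj n') * (t ^ jj * ∏ l, w' l ^ n' l))
          (t ^ jj * ∑' n' : Fin k → ℕ, c (Fin.cons jj n') * ∏ l, w' l ^ n' l) :=
        this.congr_fun fun n' => by ring
      rw [mul_comm (t ^ jj)] at h2
      exact h2
    have hzero : ∀ (j : ℕ) (n' : Fin k → ℕ), c (Fin.cons j n') = 0 := by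
      intro j
      refine ih (fun n' => c (Fin.cons j n')) fun w' => ?_
      have hfib : Summable fun n' : Fin k → ℕ =>
          c (Fin.cons j n') * ((1:ℝ) ^ j * ∏ l, w' l ^ n' l) :=
        (hprod 1 w').summable.prod_factor j
      have hfib' : Summable fun n' : Fin k → ℕ =>
          c (Fin.cons j n') * ∏ l, w' l ^ n' l := by
        refine hfib.congr fun n' => by rw [one_pow, one_mul]
      have := hfib'.hasSum
      rwa [hkey j w'] at this
    have hn : n = Fin.cons (n 0) (Fin.tail n) := (Fin.cons_self_tail n).symm
    rw [hn]
    exact hzero (n 0) (Fin.tail n)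

lemma kraw_pair (k : ℕ) (c : (Fin k → ℕ) → (Fin k → ℕ) → ℝ)
    (h : ∀ w v : Fin k → ℝ, HasSum (fun q : (Fin k → ℕ) × (Fin k → ℕ) =>
        c q.1 q.2 * ((∏ l, w l ^ q.1 l) * ∏ l, v l ^ q.2 l)) 0) :
    ∀ m n, c m n = 0 := by
  intro m n
  have key : ∀ v : Fin k → ℝ, HasSum (fun n' => c m n' * ∏ l, v l ^ n' l) 0 := by
    intro v
    have hkey : ∀ (m' : Fin k → ℕ),
        (∑' n' : Fin k → ℕ, c m' n' * ∏ l, v l ^ n' l) = 0 := by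
      intro m'
      refine kraw_multi k (fun m' => ∑' n' : Fin k → ℕ, c m' n' * ∏ l, v l ^ n' l)
        (fun w => ?_) m'
      refine HasSum.prod_fiberwise (h w v) fun m'' => ?_
      have hfib : Summable fun n' : Fin k → ℕ =>
          c m'' n' * ((∏ l, w l ^ m'' l) * ∏ l, v l ^ n' l) :=
        (h w v).summable.prod_factor m''
      have hre : (fun n' : Fin k → ℕ => c m'' n' * ((∏ l, w l ^ m'' l) * ∏ l, v l ^ n' l))
          = fun n' => (∏ l, w l ^ m'' l) * (c m'' n' * ∏ l, v l ^ n' l) := by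
        funext n'; ring
      rw [hre] at hfib
      have h2 := hfib.hasSum
      rw [tsum_mul_left] at h2
      have h3 : HasSum (fun n' : Fin k → ℕ => c m'' n' * ((∏ l, w l ^ m'' l) * ∏ l, v l ^ n' l))
          ((∏ l, w l ^ m'' l) * ∑' n' : Fin k → ℕ, c m'' n' * ∏ l, v l ^ n' l) :=
        h2.congr_fun fun n' => by ring
      rw [mul_comm (∏ l, w l ^ m'' l)] at h3
      exact h3
    have hfib : Summable fun n' : Fin k → ℕ =>
        c m n' * ((∏ l, (1:ℝ) ^ m l) * ∏ l, v l ^ n' l) :=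
      (h 1 v).summable.prod_factor m
    have hfib' : Summable fun n' : Fin k → ℕ => c m n' * ∏ l, v l ^ n' l :=
      hfib.congr fun n' => by simp
    have := hfib'.hasSum
    rwa [hkey m] at this
  exact kraw_multi k (c m) key n

lemma kraw_psum {d : ℕ} {κ : ℕ} (p : Fin d → ℝ) (a : Fin κ → ℝ) (u : Fin κ → Fin d → ℝ)
    (hpsum : ∑ j, p j = 1) (hu0 : ∀ k, ∑ j, u k j * p j = 0)
    (horth : ∀ k l, ∑ j, u k j * u l j * p j = if k = l then a k else 0)
    (w v : Fin κ → ℝ) :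
    ∑ j, p j * ((1 + ∑ l, w l * u l j) * (1 + ∑ l, v l * u l j))
      = 1 + ∑ l, a l * (w l * v l) := by
  have expand : ∀ j, p j * ((1 + ∑ l, w l * u l j) * (1 + ∑ l, v l * u l j))
      = p j + ((∑ l, w l * (u l j * p j)) + ((∑ l, v l * (u l j * p j))
        + ∑ l, ∑ l', (w l * v l') * (u l j * u l' j * p j))) := by
    intro j
    have e1 : ∑ l, w l * (u l j * p j) = p j * ∑ l, w l * u l j := by
      rw [Finset.mul_sum]; exact Finset.sum_congr rfl fun l _ => by ring
    have e2 : ∑ l, v l * (u l j * p j) = p j * ∑ l, v l * u l j := by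
      rw [Finset.mul_sum]; exact Finset.sum_congr rfl fun l _ => by ring
    have e3 : ∑ l, ∑ l', (w l * v l') * (u l j * u l' j * p j)
        = p j * ((∑ l, w l * u l j) * (∑ l, v l * u l j)) := by
      rw [Finset.sum_mul_sum, Finset.mul_sum]
      refine Finset.sum_congr rfl fun l _ => ?_
      rw [Finset.mul_sum]
      exact Finset.sum_congr rfl fun l' _ => by ring
    rw [e1, e2, e3]; ring
  rw [Finset.sum_congr rfl fun j _ => expand j, Finset.sum_add_distrib,
    Finset.sum_add_distrib, Finset.sum_add_distrib, hpsum]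
  have hw : ∑ j, ∑ l, w l * (u l j * p j) = 0 := by
    rw [Finset.sum_comm]
    refine Finset.sum_eq_zero fun l _ => ?_
    rw [← Finset.mul_sum, hu0 l, mul_zero]
  have hv : ∑ j, ∑ l, v l * (u l j * p j) = 0 := by
    rw [Finset.sum_comm]
    refine Finset.sum_eq_zero fun l _ => ?_
    rw [← Finset.mul_sum, hu0 l, mul_zero]
  have hwv : ∑ j, ∑ l, ∑ l', (w l * v l') * (u l j * u l' j * p j)
      = ∑ l, a l * (w l * v l) := by
    rw [Finset.sum_comm]
    refine Finset.sum_congr rfl fun l _ => ?_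
    rw [Finset.sum_comm]
    have step : ∀ l' : Fin κ, ∑ j, (w l * v l') * (u l j * u l' j * p j)
        = if l = l' then a l * (w l * v l') else 0 := by
      intro l'
      rw [← Finset.mul_sum, horth l l']
      split_ifs <;> ring
    rw [Finset.sum_congr rfl fun l' _ => step l', Finset.sum_ite_eq]
    simp
  rw [hw, hv, hwv]; ring

lemma kraw_perx {d κ : ℕ} (u : Fin κ → Fin d → ℝ)
    (Q : (Fin κ → ℕ) → (Fin d → ℕ) → ℝ)
    (hgen : ∀ (x : Fin d → ℕ) (w : Fin κ → ℝ),
      HasSum (fun n : Fin κ → ℕ => Q n x * ∏ l, w l ^ n l)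
        (∏ j, (1 + ∑ l, w l * u l j) ^ x j))
    (w v : Fin κ → ℝ) (x : Fin d → ℕ) (C : ℝ) :
    HasSum (fun q : (Fin κ → ℕ) × (Fin κ → ℕ) =>
      (C * (Q q.1 x * Q q.2 x)) * ((∏ l, w l ^ q.1 l) * ∏ l, v l ^ q.2 l))
      (C * ((∏ j, (1 + ∑ l, w l * u l j) ^ x j) * ∏ j, (1 + ∑ l, v l * u l j) ^ x j)) := by
  have h1 := hgen x w
  have h2 := hgen x v
  have hsummul : Summable (fun q : (Fin κ → ℕ) × (Fin κ → ℕ) =>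
      (Q q.1 x * ∏ l, w l ^ q.1 l) * (Q q.2 x * ∏ l, v l ^ q.2 l)) :=
    summable_mul_of_summable_norm (f := fun m : Fin κ → ℕ => Q m x * ∏ l, w l ^ m l)
      (g := fun n : Fin κ → ℕ => Q n x * ∏ l, v l ^ n l)
      (summable_norm_iff.mpr h1.summable) (summable_norm_iff.mpr h2.summable)
  have hmul := (h1.mul h2 hsummul).mul_left C
  refine hmul.congr_fun fun q => ?_
  ring

set_option maxHeartbeats 1000000 in
lemma kraw_HS {d κ N : ℕ} (p : Fin d → ℝ) (a : Fin κ → ℝ) (u : Fin κ → Fin d → ℝ)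
    (hpsum : ∑ j, p j = 1) (hu0 : ∀ k, ∑ j, u k j * p j = 0)
    (horth : ∀ k l, ∑ j, u k j * u l j * p j = if k = l then a k else 0)
    (Q : (Fin κ → ℕ) → (Fin d → ℕ) → ℝ)
    (hgen : ∀ (x : Fin d → ℕ) (w : Fin κ → ℝ),
      HasSum (fun n : Fin κ → ℕ => Q n x * ∏ l, w l ^ n l)
        (∏ j, (1 + ∑ l, w l * u l j) ^ x j))
    (w v : Fin κ → ℝ) :
    HasSum (fun q : (Fin κ → ℕ) × (Fin κ → ℕ) =>
        (∑ x ∈ Fintype.piFinset (fun _ : Fin d => Finset.range (N+1)),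
          if (∑ i, x i) = N then
            (N.factorial : ℝ) / (∏ i, (x i).factorial) * (∏ i, p i ^ x i)
              * (Q q.1 x * Q q.2 x)
          else 0)
        * ((∏ l, w l ^ q.1 l) * ∏ l, v l ^ q.2 l))
      ((1 + ∑ l, a l * (w l * v l)) ^ N) := by
  classical
  set s : Finset (Fin d → ℕ) := Fintype.piFinset (fun _ : Fin d => Finset.range (N+1)) with hs
  -- per-x HasSum
  have hx : ∀ x : Fin d → ℕ, HasSum (fun q : (Fin κ → ℕ) × (Fin κ → ℕ) =>
      (if (∑ i, x i) = N then
        (N.factorial : ℝ) / (∏ i, (x i).factorial) * (∏ i, p i ^ x i) * (Q q.1 x * Q q.2 x)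
      else 0) * ((∏ l, w l ^ q.1 l) * ∏ l, v l ^ q.2 l))
      ((if (∑ i, x i) = N then
        (N.factorial : ℝ) / (∏ i, (x i).factorial) * (∏ i, p i ^ x i) else 0)
        * ((∏ j, (1 + ∑ l, w l * u l j) ^ x j) * ∏ j, (1 + ∑ l, v l * u l j) ^ x j)) := by
    intro x
    have hmul := kraw_perx u Q hgen w v x
      (if (∑ i, x i) = N then
        (N.factorial : ℝ) / (∏ i, (x i).factorial) * (∏ i, p i ^ x i) else 0)
    refine hmul.congr_fun fun q => ?_
    split_ifs <;> ring
  have hsum := hasSum_sum (fun x (_ : x ∈ s) => hx x)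
  have hfun : (fun q : (Fin κ → ℕ) × (Fin κ → ℕ) =>
      ∑ x ∈ s, (if (∑ i, x i) = N then
        (N.factorial : ℝ) / (∏ i, (x i).factorial) * (∏ i, p i ^ x i) * (Q q.1 x * Q q.2 x)
      else 0) * ((∏ l, w l ^ q.1 l) * ∏ l, v l ^ q.2 l))
      = fun q : (Fin κ → ℕ) × (Fin κ → ℕ) =>
        (∑ x ∈ s, if (∑ i, x i) = N then
            (N.factorial : ℝ) / (∏ i, (x i).factorial) * (∏ i, p i ^ x i)
              * (Q q.1 x * Q q.2 x)
          else 0) * ((∏ l, w l ^ q.1 l) * ∏ l, v l ^ q.2 l) := by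
    funext q; rw [Finset.sum_mul]
  rw [hfun] at hsum
  have hval : ∑ x ∈ s, (if (∑ i, x i) = N then
      (N.factorial : ℝ) / (∏ i, (x i).factorial) * (∏ i, p i ^ x i) else 0)
      * ((∏ j, (1 + ∑ l, w l * u l j) ^ x j) * ∏ j, (1 + ∑ l, v l * u l j) ^ x j)
      = (1 + ∑ l, a l * (w l * v l)) ^ N := by
    rw [← kraw_psum p a u hpsum hu0 horth w v,
      Finset.sum_pow_eq_sum_piAntidiag Finset.univ
        (fun j => p j * ((1 + ∑ l, w l * u l j) * (1 + ∑ l, v l * u l j))) N]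
    have hset : Finset.piAntidiag (Finset.univ : Finset (Fin d)) N
        = s.filter (fun x => (∑ i, x i) = N) := by
      ext x
      simp only [Finset.mem_piAntidiag, Finset.mem_filter, hs, Fintype.mem_piFinset,
        Finset.mem_range, Finset.mem_univ, ne_eq]
      have hle : ∀ i, x i ≤ ∑ i, x i :=
        fun i => Finset.single_le_sum (fun i _ => Nat.zero_le _) (Finset.mem_univ i)
      constructor
      · intro hxN
        have h1 : (∑ i, x i) = N := by tauto
        refine ⟨fun i => ?_, h1⟩
        have := hle i
        omega
      · intro hxN
        have h1 : (∑ i, x i) = N := by tauto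
        simp [h1]
    rw [hset, Finset.sum_filter]
    refine Finset.sum_congr rfl fun x _ => ?_
    by_cases hxN : (∑ i, x i) = N
    · rw [if_pos hxN, if_pos hxN]
      have hmulti : ((Nat.multinomial Finset.univ x : ℕ) : ℝ)
          = (N.factorial : ℝ) / (∏ i, ((x i).factorial : ℝ)) := by
        have hspec := Nat.multinomial_spec Finset.univ x
        rw [eq_div_iff (by positivity)]
        rw [← Nat.cast_prod, ← Nat.cast_mul, mul_comm]
        rw [hspec, hxN]
      have hprod : ∏ j, (p j * ((1 + ∑ l, w l * u l j) * (1 + ∑ l, v l * u l j))) ^ x j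
          = (∏ i, p i ^ x i) * ((∏ j, (1 + ∑ l, w l * u l j) ^ x j)
            * ∏ j, (1 + ∑ l, v l * u l j) ^ x j) := by
        rw [← Finset.prod_mul_distrib, ← Finset.prod_mul_distrib]
        exact Finset.prod_congr rfl fun j _ => by rw [mul_pow, mul_pow]
      rw [hmulti, hprod]
      push_cast
      ring
    · rw [if_neg hxN, if_neg hxN, zero_mul]
  rw [hval] at hsum
  exact hsum

set_option maxHeartbeats 1000000 in
lemma kraw_HR {κ N : ℕ} (a : Fin κ → ℝ) (w v : Fin κ → ℝ) :
    HasSum (fun q : (Fin κ → ℕ) × (Fin κ → ℕ) =>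
      (if q.1 = q.2 ∧ (∑ l, q.2 l) ≤ N then
        (N.factorial : ℝ) / ((∏ l, (q.2 l).factorial) * (N - ∑ l, q.2 l).factorial)
          * ∏ l, a l ^ q.2 l
      else 0) * ((∏ l, w l ^ q.1 l) * ∏ l, v l ^ q.2 l))
      ((1 + ∑ l, a l * (w l * v l)) ^ N) := by
  classical
  set f : (Fin κ → ℕ) × (Fin κ → ℕ) → ℝ := fun q =>
      (if q.1 = q.2 ∧ (∑ l, q.2 l) ≤ N then
        (N.factorial : ℝ) / ((∏ l, (q.2 l).factorial) * (N - ∑ l, q.2 l).factorial)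
          * ∏ l, a l ^ q.2 l
      else 0) * ((∏ l, w l ^ q.1 l) * ∏ l, v l ^ q.2 l) with hf
  set t : Finset (Fin κ → ℕ) := Fintype.piFinset (fun _ => Finset.range (N+1)) with ht
  set T : Finset ((Fin κ → ℕ) × (Fin κ → ℕ)) := t.image (fun n => (n, n)) with hT
  have hsupp : ∀ q ∉ T, f q = 0 := by
    rintro ⟨q1, q2⟩ hq
    rw [hf]
    simp only []
    rw [if_neg, zero_mul]
    rintro ⟨h1, h2⟩
    apply hq
    rw [hT, Finset.mem_image]
    subst h1
    refine ⟨q1, ?_, rfl⟩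
    rw [ht, Fintype.mem_piFinset]
    intro l
    rw [Finset.mem_range]
    have : q1 l ≤ ∑ l, q1 l :=
      Finset.single_le_sum (f := fun i => q1 i) (fun i _ => Nat.zero_le _) (Finset.mem_univ l)
    omega
  have hHS := hasSum_sum_of_ne_finset_zero (L := SummationFilter.unconditional _) hsupp
  have hval : ∑ q ∈ T, f q = (1 + ∑ l, a l * (w l * v l)) ^ N := by
    rw [hT, Finset.sum_image (by intro x _ y _ h; exact (Prod.mk.injEq _ _ _ _).mp h |>.1)]
    have hdiag : ∀ n : Fin κ → ℕ, f (n, n)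
        = if (∑ l, n l) ≤ N then
            ((N.factorial : ℝ) / ((∏ l, (n l).factorial) * (N - ∑ l, n l).factorial)
              * ∏ l, a l ^ n l) * ((∏ l, w l ^ n l) * ∏ l, v l ^ n l)
          else 0 := by
      intro n
      rw [hf]
      simp only [true_and]
      split_ifs <;> simp
    rw [Finset.sum_congr rfl fun n _ => hdiag n, ← Finset.sum_filter]
    -- multinomial theorem on Option (Fin κ)
    have hopt : (1 + ∑ l, a l * (w l * v l))
        = ∑ o : Option (Fin κ), Option.elim o 1 (fun l => a l * (w l * v l)) := by
      rw [Fintype.sum_option]; simp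
    rw [hopt, Finset.sum_pow_eq_sum_piAntidiag Finset.univ
      (fun o => Option.elim o 1 (fun l => a l * (w l * v l))) N]
    refine (Finset.sum_nbij' (fun g : Option (Fin κ) → ℕ => g ∘ some)
      (fun n : Fin κ → ℕ => fun o => Option.elim o (N - ∑ l, n l) n)
      ?_ ?_ ?_ ?_ ?_).symm
    · -- maps to filter
      intro g hg
      rw [Finset.mem_piAntidiag] at hg
      obtain ⟨hgsum, -⟩ := hg
      rw [Fintype.sum_option] at hgsum
      rw [Finset.mem_filter]
      constructor
      · rw [ht, Fintype.mem_piFinset]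
        intro l
        rw [Finset.mem_range]
        have : g (some l) ≤ ∑ l, g (some l) :=
          Finset.single_le_sum (f := fun i => g (some i)) (fun i _ => Nat.zero_le _)
            (Finset.mem_univ l)
        simp only [Function.comp]
        omega
      · simp only [Function.comp]
        omega
    · intro n hn
      rw [Finset.mem_filter] at hn
      rw [Finset.mem_piAntidiag]
      refine ⟨?_, fun o _ => Finset.mem_univ o⟩
      rw [Fintype.sum_option]
      simp only [Option.elim]
      omega
    · intro g hg
      rw [Finset.mem_piAntidiag] at hg
      obtain ⟨hgsum, -⟩ := hg
      rw [Fintype.sum_option] at hgsum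
      funext o
      cases o with
      | none => simp only [Option.elim, Function.comp]; omega
      | some l => simp [Option.elim, Function.comp]
    · intro n hn
      funext l
      simp [Option.elim, Function.comp]
    · -- values agree
      intro g hg
      rw [Finset.mem_piAntidiag] at hg
      obtain ⟨hgsum, -⟩ := hg
      rw [Fintype.sum_option] at hgsum
      have hsum' : ∑ l, (g ∘ some) l = ∑ l, g (some l) := rfl
      have hNsub : N - ∑ l, (g ∘ some) l = g none := by rw [hsum']; omega
      have hmulti : ((Nat.multinomial Finset.univ g : ℕ) : ℝ)
          = (N.factorial : ℝ) / ((∏ l, ((g (some l)).factorial : ℝ))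
              * ((g none).factorial : ℝ)) := by
        have hspec := Nat.multinomial_spec Finset.univ g
        rw [eq_div_iff (by positivity)]
        have hprodopt : ∏ o : Option (Fin κ), ((g o).factorial : ℝ)
            = ((g none).factorial : ℝ) * ∏ l, ((g (some l)).factorial : ℝ) :=
          Fintype.prod_option _
        calc (Nat.multinomial Finset.univ g : ℝ)
              * ((∏ l, ((g (some l)).factorial : ℝ)) * ((g none).factorial : ℝ))
            = (Nat.multinomial Finset.univ g : ℝ) * ∏ o : Option (Fin κ), ((g o).factorial : ℝ) := by
              rw [hprodopt]; ring
          _ = (N.factorial : ℝ) := by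
              rw [← Nat.cast_prod, ← Nat.cast_mul, mul_comm, hspec, Fintype.sum_option, hgsum]
      have hprodval : ∏ o : Option (Fin κ), (Option.elim o 1 (fun l => a l * (w l * v l))) ^ g o
          = (∏ l, a l ^ (g (some l))) * ((∏ l, w l ^ (g (some l))) * ∏ l, v l ^ (g (some l))) := by
        rw [Fintype.prod_option]
        simp only [Option.elim, one_pow, one_mul]
        rw [← Finset.prod_mul_distrib, ← Finset.prod_mul_distrib]
        exact Finset.prod_congr rfl fun l _ => by rw [mul_pow, mul_pow]
      rw [hmulti, hprodval]
      simp only [Function.comp]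
      rw [show N - ∑ x, g (some x) = g none from by omega, Nat.cast_prod]
      ring
  rw [hval] at hHS
  exact hHS.congr_fun fun q => by rw [hf]


set_option maxHeartbeats 1000000 in
/-- Orthogonality of the multivariate Krawtchouk polynomials `Q_n(x;u)`, defined as
the coefficients of `w_1^{n_1}⋯w_{d-1}^{n_{d-1}}` in
`Π_{j=1}^d (1 + Σ_{l=1}^{d-1} w_l u_j^{(l)})^{x_j}`, with respect to the
multinomial `(N,p)` distribution:
`E[Q_m Q_n] = δ_{mn} N!/(n_1!⋯n_{d-1}!(N-|n|)!) Π_l a_l^{n_l}` for `|m|,|n| ≤ N`. -/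
theorem multivariate_krawtchouk_orthogonality
    (d N : ℕ) (hd : 1 ≤ d)
    (p : Fin d → ℝ) (a : Fin (d - 1) → ℝ) (u : Fin (d - 1) → Fin d → ℝ)
    (hp : ∀ j, 0 < p j) (hpsum : ∑ j, p j = 1)
    (hu0 : ∀ k, ∑ j, u k j * p j = 0)
    (horth : ∀ k l, ∑ j, u k j * u l j * p j = if k = l then a k else 0)
    (Q : (Fin (d - 1) → ℕ) → (Fin d → ℕ) → ℝ)
    (hgen : ∀ (x : Fin d → ℕ) (w : Fin (d - 1) → ℝ),
      HasSum (fun n : Fin (d - 1) → ℕ => Q n x * ∏ l, w l ^ n l)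
        (∏ j, (1 + ∑ l, w l * u l j) ^ x j)) :
    ∀ m n : Fin (d - 1) → ℕ, (∑ l, m l) ≤ N → (∑ l, n l) ≤ N →
      (∑' x : Fin d → ℕ,
          if (∑ i, x i) = N then
            (N.factorial : ℝ) / (∏ i, (x i).factorial) * (∏ i, p i ^ x i)
              * (Q m x * Q n x)
          else 0)
        = if m = n then
            (N.factorial : ℝ)
              / ((∏ l, (n l).factorial) * (N - ∑ l, n l).factorial)
              * ∏ l, a l ^ n l
          else 0 := by
  intro m n hm hn
  classical
  set s : Finset (Fin d → ℕ) := Fintype.piFinset (fun _ : Fin d => Finset.range (N+1)) with hs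
  have hsupp : ∀ x : Fin d → ℕ, x ∉ s →
      (if (∑ i, x i) = N then
        (N.factorial : ℝ) / (∏ i, (x i).factorial) * (∏ i, p i ^ x i)
          * (Q m x * Q n x)
      else 0) = 0 := by
    intro x hx
    rw [if_neg]
    intro hN
    apply hx
    rw [hs, Fintype.mem_piFinset]
    intro i
    rw [Finset.mem_range]
    have := Finset.single_le_sum (f := x) (fun i _ => Nat.zero_le _)
      (Finset.mem_univ i)
    omega
  rw [tsum_eq_sum hsupp]
  have hsub : ∀ w v : Fin (d-1) → ℝ,
      HasSum (fun q : (Fin (d-1) → ℕ) × (Fin (d-1) → ℕ) =>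
        ((∑ x ∈ s, if (∑ i, x i) = N then
            (N.factorial : ℝ) / (∏ i, (x i).factorial) * (∏ i, p i ^ x i)
              * (Q q.1 x * Q q.2 x)
          else 0)
        - (if q.1 = q.2 ∧ (∑ l, q.2 l) ≤ N then
            (N.factorial : ℝ) / ((∏ l, (q.2 l).factorial) * (N - ∑ l, q.2 l).factorial)
              * ∏ l, a l ^ q.2 l
          else 0))
        * ((∏ l, w l ^ q.1 l) * ∏ l, v l ^ q.2 l)) 0 := by
    intro w v
    have h1 := kraw_HS (N := N) p a u hpsum hu0 horth Q hgen w v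
    have h2 := kraw_HR (N := N) a w v
    have h3 := h1.sub h2
    rw [sub_self] at h3
    exact h3.congr_fun fun q => by ring
  have hzero := kraw_pair (d-1) (fun m' n' =>
      (∑ x ∈ s, if (∑ i, x i) = N then
        (N.factorial : ℝ) / (∏ i, (x i).factorial) * (∏ i, p i ^ x i)
          * (Q m' x * Q n' x)
      else 0)
      - (if m' = n' ∧ (∑ l, n' l) ≤ N then
          (N.factorial : ℝ) / ((∏ l, (n' l).factorial) * (N - ∑ l, n' l).factorial)
            * ∏ l, a l ^ n' l
        else 0)) hsub m n
  have hkey : (∑ x ∈ s, if (∑ i, x i) = N then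
      (N.factorial : ℝ) / (∏ i, (x i).factorial) * (∏ i, p i ^ x i)
        * (Q m x * Q n x)
    else 0)
      = if m = n ∧ (∑ l, n l) ≤ N then
          (N.factorial : ℝ) / ((∏ l, (n l).factorial) * (N - ∑ l, n l).factorial)
            * ∏ l, a l ^ n l
        else 0 := by linarith
  rw [hkey]
  by_cases hmn : m = n
  · rw [if_pos ⟨hmn, hn⟩, if_pos hmn]
  · rw [if_neg (fun h => hmn h.1), if_neg hmn]
end

section
/- For X = (X_1,…,X_d) independent Poisson with means μ, the joint expectation of products of the Poisson-Charlier generating functions satisfies E[G_PC(X,z,u) G_PC(X,w,u)] = exp{|μ|^{-1} Σ_{j=0}^{d-1} a_j z_j w_j}, where G_PC(X,w,u) = e^{w_0} Π_{i=1}^d (1 - w_0/|μ| + |μ|^{-1} Σ_{j=1}^{d-1} u_i^{(j)} w_j)^{X_i}. -/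
lemma tsum_pi_prod : ∀ (n : ℕ) (f : Fin n → ℕ → ℝ), (∀ i, Summable fun k => |f i k|) →
    (Summable fun x : Fin n → ℕ => ∏ i, |f i (x i)|) ∧
      (∑' x : Fin n → ℕ, ∏ i, f i (x i)) = ∏ i, ∑' k, f i k := by
  intro n
  induction n with
  | zero =>
    intro f hf
    constructor
    · exact Summable.of_finite
    · simp
  | succ n ih =>
    intro f hf
    have key : ∀ (g : Fin (n+1) → ℕ → ℝ) (p : ℕ × (Fin n → ℕ)),
        (∏ i, g i (Fin.consEquiv (fun _ => ℕ) p i)) = g 0 p.1 * ∏ i, g i.succ (p.2 i) := by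
      intro g p
      rw [Fin.prod_univ_succ]
      simp [Fin.consEquiv]
    obtain ⟨hg, hgt⟩ := ih (fun i => f i.succ) (fun i => hf i.succ)
    have hsum2 : Summable fun p : ℕ × (Fin n → ℕ) => |f 0 p.1| * ∏ i, |f i.succ (p.2 i)| := by
      have h1 : (0 : ℕ → ℝ) ≤ fun k => |f 0 k| := fun k => abs_nonneg _
      have h2 : (0 : (Fin n → ℕ) → ℝ) ≤ fun y => ∏ i, |f i.succ (y i)| :=
        fun y => Finset.prod_nonneg fun _ _ => abs_nonneg _
      exact (Summable.mul_of_nonneg (hf 0) hg h1 h2).congr fun p => rfl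
    have hS : Summable fun x : Fin (n+1) → ℕ => ∏ i, |f i (x i)| := by
      refine (Equiv.summable_iff (Fin.consEquiv (fun _ => ℕ))).mp ?_
      refine hsum2.congr fun p => ?_
      exact (key (fun i k => |f i k|) p).symm
    refine ⟨hS, ?_⟩
    calc ∑' x : Fin (n+1) → ℕ, ∏ i, f i (x i)
        = ∑' p : ℕ × (Fin n → ℕ), ∏ i, f i (Fin.consEquiv (fun _ => ℕ) p i) :=
          ((Fin.consEquiv (fun _ => ℕ)).tsum_eq _).symm
      _ = ∑' p : ℕ × (Fin n → ℕ), f 0 p.1 * ∏ i, f i.succ (p.2 i) := tsum_congr fun p => key f p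
      _ = (∑' k, f 0 k) * ∑' y : Fin n → ℕ, ∏ i, f i.succ (y i) := by
          refine (tsum_mul_tsum_of_summable_norm (f := f 0)
            (g := fun y : Fin n → ℕ => ∏ i, f i.succ (y i)) ?_ ?_).symm
          · simpa [Real.norm_eq_abs] using hf 0
          · refine hg.congr fun y => ?_
            rw [Real.norm_eq_abs, Finset.abs_prod]
      _ = ∏ i, ∑' k, f i k := by rw [hgt, Fin.prod_univ_succ]

lemma poisson_abs_summable (m c : ℝ) :
    Summable fun n : ℕ => |Real.exp (-m) * ((m * c) ^ n / n.factorial)| := by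
  refine ((Real.summable_pow_div_factorial |m * c|).mul_left (Real.exp (-m))).congr fun n => ?_
  rw [abs_mul (Real.exp (-m)), abs_of_pos (Real.exp_pos _), abs_div ((m*c)^n), abs_pow,
    Nat.abs_cast]

lemma poisson_exp (m c : ℝ) :
    ∑' n : ℕ, Real.exp (-m) * ((m * c) ^ n / n.factorial) = Real.exp (m * c - m) := by
  rw [tsum_mul_left]
  have h : ∑' n : ℕ, (m * c) ^ n / (n.factorial : ℝ) = Real.exp (m * c) := by
    rw [Real.exp_eq_exp_ℝ, NormedSpace.exp_eq_tsum_div]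
  rw [h, ← Real.exp_add]
  ring_nf

lemma main_aux (d : ℕ) (μ : Fin d → ℝ) (A B : Fin d → ℝ) (c1 c2 : ℝ) :
    (∑' x : Fin d → ℕ,
        (∏ i, Real.exp (-μ i) * μ i ^ x i / (x i).factorial)
          * (Real.exp c1 * ∏ i, A i ^ x i) * (Real.exp c2 * ∏ i, B i ^ x i))
      = Real.exp c1 * Real.exp c2 * Real.exp (∑ i, (μ i * (A i * B i) - μ i)) := by
  have hterm : ∀ x : Fin d → ℕ,
      (∏ i, Real.exp (-μ i) * μ i ^ x i / (x i).factorial)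
          * (Real.exp c1 * ∏ i, A i ^ x i) * (Real.exp c2 * ∏ i, B i ^ x i)
        = Real.exp c1 * Real.exp c2
            * ∏ i, Real.exp (-μ i) * ((μ i * (A i * B i)) ^ x i / (x i).factorial) := by
    intro x
    have h1 : ∀ i : Fin d, Real.exp (-μ i) * μ i ^ x i / (x i).factorial * A i ^ x i * B i ^ x i
        = Real.exp (-μ i) * ((μ i * (A i * B i)) ^ x i / (x i).factorial) := by
      intro i; rw [mul_pow, mul_pow]; ring
    calc (∏ i, Real.exp (-μ i) * μ i ^ x i / (x i).factorial)
          * (Real.exp c1 * ∏ i, A i ^ x i) * (Real.exp c2 * ∏ i, B i ^ x i)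
        = Real.exp c1 * Real.exp c2
            * ∏ i, (Real.exp (-μ i) * μ i ^ x i / (x i).factorial * A i ^ x i * B i ^ x i) := by
          rw [Finset.prod_mul_distrib, Finset.prod_mul_distrib]; ring
      _ = _ := by rw [Finset.prod_congr rfl fun i _ => h1 i]
  rw [tsum_congr hterm, tsum_mul_left,
    (tsum_pi_prod d (fun i n => Real.exp (-μ i) * ((μ i * (A i * B i)) ^ n / n.factorial))
      (fun i => poisson_abs_summable (μ i) (A i * B i))).2,
    Finset.prod_congr rfl fun i _ => poisson_exp (μ i) (A i * B i), ← Real.exp_sum]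



/-- For `X = (X_1,…,X_d)` independent Poisson with means `μ`, the joint expectation
of products of the Poisson-Charlier generating functions
`G_PC(x,w,u) = e^{w_0} Π_i (1 - w_0/|μ| + |μ|⁻¹ Σ_{j≥1} u_i^{(j)} w_j)^{x_i}`
satisfies `E[G_PC(X,z,u) G_PC(X,w,u)] = exp{|μ|⁻¹ Σ_j a_j z_j w_j}`. -/
theorem poisson_charlier_generating_function_expectation
    (d : ℕ) [NeZero d] (μ : Fin d → ℝ) (hμ : ∀ i, 0 < μ i)
    (a : Fin d → ℝ) (u : Fin d → Fin d → ℝ)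
    (hu0 : ∀ i, u 0 i = 1) (ha0 : a 0 = 1)
    (horth : ∀ k l, ∑ i, u k i * u l i * (μ i / ∑ i', μ i') = if k = l then a k else 0) :
    ∀ z w : Fin d → ℝ,
      (∑' x : Fin d → ℕ,
          (∏ i, Real.exp (-μ i) * μ i ^ x i / (x i).factorial)
            * (Real.exp (z 0) * ∏ i,
                (1 - z 0 / (∑ i', μ i')
                  + (∑ i', μ i')⁻¹ * ∑ j ∈ Finset.univ.erase 0, u j i * z j) ^ x i)
            * (Real.exp (w 0) * ∏ i,
                (1 - w 0 / (∑ i', μ i')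
                  + (∑ i', μ i')⁻¹ * ∑ j ∈ Finset.univ.erase 0, u j i * w j) ^ x i))
        = Real.exp ((∑ i', μ i')⁻¹ * ∑ j, a j * z j * w j) := by
  intro z w
  set s : ℝ := ∑ i', μ i' with hs_def
  have hs0 : 0 < s := Finset.sum_pos (fun i _ => hμ i) Finset.univ_nonempty
  have hsne : s ≠ 0 := ne_of_gt hs0
  set A : Fin d → ℝ := fun i =>
    1 - z 0 / s + s⁻¹ * ∑ j ∈ Finset.univ.erase 0, u j i * z j with hA_def
  set B : Fin d → ℝ := fun i =>
    1 - w 0 / s + s⁻¹ * ∑ j ∈ Finset.univ.erase 0, u j i * w j with hB_def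
  rw [main_aux d μ A B (z 0) (w 0), ← Real.exp_add, ← Real.exp_add]
  congr 1
  -- orthogonality facts
  have h2 : ∀ j k, ∑ i, u j i * u k i * μ i = if j = k then s * a j else 0 := by
    intro j k
    have hh : ∑ i, u j i * u k i * μ i = s * ∑ i, u j i * u k i * (μ i / s) := by
      rw [Finset.mul_sum]
      refine Finset.sum_congr rfl fun i _ => ?_
      field_simp
    rw [hh, horth j k, mul_ite, mul_zero]
  have h1 : ∀ j, ∑ i, u j i * μ i = if j = 0 then s else 0 := by
    intro j
    have := h2 j 0
    simp only [hu0, mul_one] at this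
    rw [this]
    by_cases h : j = 0
    · subst h; simp [ha0]
    · simp [h]
  -- the ζ, ω reindexed vectors
    -- ζ j = if j = 0 then -z 0 else z j
  have hP : ∀ (v : Fin d → ℝ) (i : Fin d),
      ∑ j, u j i * (if j = 0 then -v 0 else v j)
        = -v 0 + ∑ j ∈ Finset.univ.erase 0, u j i * v j := by
    intro v i
    rw [← Finset.add_sum_erase _ _ (Finset.mem_univ 0)]
    congr 1
    · simp [hu0]
    · refine Finset.sum_congr rfl fun j hj => ?_
      rw [if_neg (Finset.mem_erase.1 hj).1]
  have hA : ∀ i, A i = 1 + s⁻¹ * ∑ j, u j i * (if j = 0 then -z 0 else z j) := by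
    intro i
    rw [hP z i, hA_def]
    field_simp
    ring
  have hB : ∀ i, B i = 1 + s⁻¹ * ∑ j, u j i * (if j = 0 then -w 0 else w j) := by
    intro i
    rw [hP w i, hB_def]
    field_simp
    ring
  -- first moment sums
  have S1 : ∀ c : Fin d → ℝ, ∑ i, μ i * ∑ j, u j i * c j = s * c 0 := by
    intro c
    calc ∑ i, μ i * ∑ j, u j i * c j
        = ∑ i, ∑ j, μ i * (u j i * c j) := by
          refine Finset.sum_congr rfl fun i _ => Finset.mul_sum _ _ _
      _ = ∑ j, ∑ i, μ i * (u j i * c j) := Finset.sum_comm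
      _ = ∑ j, c j * ∑ i, u j i * μ i := by
          refine Finset.sum_congr rfl fun j _ => ?_
          rw [Finset.mul_sum]
          exact Finset.sum_congr rfl fun i _ => by ring
      _ = ∑ j, if j = 0 then c j * s else 0 := by
          refine Finset.sum_congr rfl fun j _ => ?_
          rw [h1 j, mul_ite, mul_zero]
      _ = c 0 * s := (Finset.sum_ite_eq' _ _ _).trans (if_pos (Finset.mem_univ 0))
      _ = s * c 0 := mul_comm _ _
  -- second moment sum
  have S2 : ∀ c e : Fin d → ℝ,
      ∑ i, μ i * ((∑ j, u j i * c j) * ∑ k, u k i * e k) = s * ∑ j, a j * c j * e j := by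
    intro c e
    calc ∑ i, μ i * ((∑ j, u j i * c j) * ∑ k, u k i * e k)
        = ∑ i, ∑ j, ∑ k, μ i * (u j i * c j * (u k i * e k)) := by
          refine Finset.sum_congr rfl fun i _ => ?_
          rw [Finset.sum_mul_sum, Finset.mul_sum]
          refine Finset.sum_congr rfl fun j _ => Finset.mul_sum _ _ _
      _ = ∑ j, ∑ k, ∑ i, μ i * (u j i * c j * (u k i * e k)) := by
          rw [Finset.sum_comm]
          exact Finset.sum_congr rfl fun j _ => Finset.sum_comm
      _ = ∑ j, ∑ k, c j * e k * ∑ i, u j i * u k i * μ i := by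
          refine Finset.sum_congr rfl fun j _ => Finset.sum_congr rfl fun k _ => ?_
          rw [Finset.mul_sum]
          exact Finset.sum_congr rfl fun i _ => by ring
      _ = ∑ j, ∑ k, if j = k then c j * e k * (s * a j) else 0 := by
          refine Finset.sum_congr rfl fun j _ => Finset.sum_congr rfl fun k _ => ?_
          rw [h2 j k, mul_ite, mul_zero]
      _ = ∑ j, c j * e j * (s * a j) := by
          refine Finset.sum_congr rfl fun j _ => Finset.sum_ite_eq _ _ _ |>.trans (by simp)
      _ = s * ∑ j, a j * c j * e j := by
          rw [Finset.mul_sum]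
          exact Finset.sum_congr rfl fun j _ => by ring
  have hsum : ∑ i, (μ i * (A i * B i) - μ i)
      = s⁻¹ * (∑ i, μ i * ∑ j, u j i * (if j = 0 then -z 0 else z j))
        + s⁻¹ * (∑ i, μ i * ∑ j, u j i * (if j = 0 then -w 0 else w j))
        + s⁻¹ * s⁻¹ * ∑ i, μ i * ((∑ j, u j i * (if j = 0 then -z 0 else z j))
            * ∑ k, u k i * (if k = 0 then -w 0 else w k)) := by
    rw [Finset.mul_sum, Finset.mul_sum, Finset.mul_sum, ← Finset.sum_add_distrib,
      ← Finset.sum_add_distrib]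
    refine Finset.sum_congr rfl fun i _ => ?_
    rw [hA i, hB i]
    ring
  have hzeta : ∑ j, a j * (if j = 0 then -z 0 else z j) * (if j = 0 then -w 0 else w j)
      = ∑ j, a j * z j * w j := by
    refine Finset.sum_congr rfl fun j _ => ?_
    by_cases h : j = 0
    · subst h; simp
    · simp [h]
  rw [hsum, S1, S1, S2, hzeta]
  simp only [if_pos rfl, eq_self_iff_true, if_true]
  field_simp
  ring
end

section
/- The multivariate Poisson-Charlier polynomial factorizes as C_n(X;μ,u) = (n_0!)^{-1} C_{n_0}(|X| - |n_1|; |μ|) |μ|^{-|n_1|} Q_{n_1}(X; |X|, p, u), where C_{n_0} is a 1-dimensional Poisson-Charlier polynomial and Q_{n_1} is a multivariate Krawtchouk polynomial with N = |X|. -/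
open FormalMultilinearSeries ENNReal in
lemma aux_power_series_zero {a : ℕ → ℝ} {ε : ℝ} (hε : 0 < ε)
    (h : ∀ z : ℝ, |z| < ε → HasSum (fun k => a k * z ^ k) 0) : ∀ k, a k = 0 := by
  set p := ofScalars ℝ a with hp
  have hε2 : (0:ℝ) < ε / 2 := by linarith
  have hnorm : ∀ k, ‖p k‖ ≤ |a k| := by
    intro k
    have hk : p k = a k • ContinuousMultilinearMap.mkPiAlgebraFin ℝ k ℝ := rfl
    rw [hk]
    calc ‖a k • ContinuousMultilinearMap.mkPiAlgebraFin ℝ k ℝ‖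
        ≤ ‖a k‖ * ‖ContinuousMultilinearMap.mkPiAlgebraFin ℝ k ℝ‖ :=
          ContinuousMultilinearMap.opNorm_smul_le _ _
      _ ≤ |a k| * 1 := by
          rw [Real.norm_eq_abs]
          exact mul_le_mul_of_nonneg_left
            (ContinuousMultilinearMap.norm_mkPiAlgebraFin_le.trans (by norm_num)) (abs_nonneg _)
      _ = |a k| := mul_one _
  have hsum2 : Summable (fun k => |a k| * (ε / 2) ^ k) := by
    have := (h (ε / 2) (by rw [abs_of_pos hε2]; linarith)).summable
    rw [← summable_abs_iff] at this
    refine this.congr fun k => ?_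
    rw [abs_mul, abs_pow, abs_of_pos hε2]
  have hrad : 0 < p.radius := by
    have h1 : ((ε / 2).toNNReal : ℝ≥0∞) ≤ p.radius := by
      apply p.le_radius_of_summable
      refine Summable.of_nonneg_of_le (fun k => by positivity) (fun k => ?_) hsum2
      rw [Real.coe_toNNReal _ (le_of_lt hε2)]
      exact mul_le_mul_of_nonneg_right (hnorm k) (by positivity)
    refine lt_of_lt_of_le ?_ h1
    exact_mod_cast Real.toNNReal_pos.2 hε2
  have hball := p.hasFPowerSeriesOnBall hrad
  have hev : p.sum =ᶠ[nhds (0 : ℝ)] 0 := by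
    filter_upwards [Metric.ball_mem_nhds (0 : ℝ) hε] with z hz
    have hz' : |z| < ε := by simpa [Real.dist_eq] using hz
    have hs : HasSum (fun k => p k fun _ => z) 0 := by
      refine ((h z hz').congr_fun fun k => ?_)
      rw [hp, ofScalars_apply_eq, smul_eq_mul]
    simpa [FormalMultilinearSeries.sum] using hs.tsum_eq
  have hzero : p = 0 := (hball.hasFPowerSeriesAt).eq_zero_of_eventually hev
  intro k
  exact (ofScalars_eq_zero ℝ k).mp (by rw [← hp, hzero]; rfl)



lemma aux_multi_coeff_zero : ∀ (d : ℕ) (c : (Fin d → ℕ) → ℝ) (ε : ℝ), 0 < ε →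
    (∀ w : Fin d → ℝ, (∀ j, |w j| < ε) →
      HasSum (fun n : Fin d → ℕ => c n * ∏ j, w j ^ n j) 0) →
    ∀ n, c n = 0 := by
  intro d
  induction d with
  | zero =>
    intro c ε hε h n
    have h0 := h (fun j => 0) (fun j => j.elim0)
    have h1 : HasSum (fun n : Fin 0 → ℕ => c n * ∏ j, (0:ℝ) ^ n j)
        (c n * ∏ j, (0:ℝ) ^ n j) :=
      hasSum_single n (fun b hb => absurd (Subsingleton.elim b n) hb)
    have := h0.unique h1
    simpa using this.symm
  | succ d ih =>
    intro c ε hε h n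
    have key : ∀ (k : ℕ) (m : Fin d → ℕ), c (Fin.cons k m) = 0 := by
      have main : ∀ (w' : Fin d → ℝ), (∀ j, |w' j| < ε) → ∀ (k : ℕ),
          HasSum (fun m : Fin d → ℕ => c (Fin.cons k m) * ∏ j, w' j ^ m j) 0 := by
        intro w' hw'
        -- for each z small we get a HasSum on the product type
        have hzsum : ∀ z : ℝ, |z| < ε →
            HasSum (fun p : ℕ × (Fin d → ℕ) =>
              z ^ p.1 * (c (Fin.cons p.1 p.2) * ∏ j, w' j ^ p.2 j)) 0 := by
          intro z hz
          have hw : ∀ j, |(Fin.cons z w' : Fin (d+1) → ℝ) j| < ε := by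
            intro j
            refine Fin.cases ?_ ?_ j
            · simpa using hz
            · intro i; simpa using hw' i
          have h2 := h (Fin.cons z w') hw
          have h3 := ((Fin.consEquiv (fun _ : Fin (d+1) => ℕ)).hasSum_iff).mpr h2
          refine h3.congr_fun fun p => ?_
          show z ^ p.1 * (c (Fin.cons p.1 p.2) * ∏ j, w' j ^ p.2 j) = _
          show _ = c (Fin.cons p.1 p.2) * ∏ j, (Fin.cons z w') j ^ (Fin.cons p.1 p.2 : Fin (d+1) → ℕ) j
          rw [Fin.prod_univ_succ]
          simp only [Fin.cons_zero, Fin.cons_succ]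
          ring
        -- summability of each fiber (take z = ε/2)
        have hε2 : (0:ℝ) < ε / 2 := by linarith
        have hfib : ∀ k : ℕ, Summable (fun m : Fin d → ℕ =>
            c (Fin.cons k m) * ∏ j, w' j ^ m j) := by
          intro k
          have hs := ((hzsum (ε/2) (by rw [abs_of_pos hε2]; linarith)).summable.prod_factor k)
          have := (summable_mul_left_iff (a := (ε/2)^k) (by positivity)).mp hs
          exact this
        -- the fiber sums
        set A : ℕ → ℝ := fun k => ∑' m : Fin d → ℕ, c (Fin.cons k m) * ∏ j, w' j ^ m j with hA
        have hAz : ∀ z : ℝ, |z| < ε → HasSum (fun k => A k * z ^ k) 0 := by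
          intro z hz
          have h4 : ∀ k : ℕ, HasSum (fun m : Fin d → ℕ =>
              z ^ k * (c (Fin.cons k m) * ∏ j, w' j ^ m j)) (z ^ k * A k) :=
            fun k => ((hfib k).hasSum).mul_left _
          have h5 := (hzsum z hz).prod_fiberwise h4
          refine h5.congr_fun fun k => mul_comm _ _
        have hA0 := aux_power_series_zero hε hAz
        intro k
        have := (hfib k).hasSum
        have hk : (∑' (m : Fin d → ℕ), c (Fin.cons k m) * ∏ j : Fin d, w' j ^ m j) = 0 := hA0 k
        rw [hk] at this
        exact this
      intro k m
      exact ih (fun m => c (Fin.cons k m)) ε hε (fun w' hw' => main w' hw' k) m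
    rw [← Fin.cons_self_tail n]
    exact key _ _


lemma aux_poly_gen (d : ℕ) [NeZero d] (u : Fin d → Fin d → ℝ) (x : Fin d → ℕ) :
    ∃ (q : (Fin d → ℕ) → ℝ) (s : Finset (Fin d → ℕ)),
      (∀ n ∉ s, q n = 0) ∧
      (∀ v : Fin d → ℝ, ∑ n ∈ s, q n * ∏ l, v l ^ n l
          = ∏ i, (1 + ∑ l ∈ Finset.univ.erase 0, v l * u l i) ^ x i) := by
  classical
  set P : MvPolynomial (Fin d) ℝ :=
    ∏ i, (1 + ∑ l ∈ Finset.univ.erase 0, MvPolynomial.X l * MvPolynomial.C (u l i)) ^ x i with hP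
  set e := (Finsupp.equivFunOnFinite : (Fin d →₀ ℕ) ≃ (Fin d → ℕ)) with he
  refine ⟨fun n => MvPolynomial.coeff (e.symm n) P, P.support.map e.toEmbedding, ?_, ?_⟩
  · intro n hn
    apply MvPolynomial.notMem_support_iff.mp
    intro hmem
    exact hn (Finset.mem_map.mpr ⟨e.symm n, hmem, by simp⟩)
  · intro v
    rw [Finset.sum_map]
    have : ∀ D ∈ P.support,
        MvPolynomial.coeff (e.symm (e.toEmbedding D)) P * ∏ l, v l ^ (e.toEmbedding D) l
          = MvPolynomial.coeff D P * ∏ l, v l ^ D l := by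
      intro D _
      simp [he]
    rw [Finset.sum_congr rfl this]
    rw [← MvPolynomial.eval_eq']
    rw [hP]
    simp [MvPolynomial.eval_prod]


def auxSplit (d : ℕ) [NeZero d] : (Fin d → ℕ) ≃ ({m : Fin d → ℕ // m 0 = 0} × ℕ) where
  toFun nn := (⟨Function.update nn 0 0, Function.update_self 0 0 nn⟩, nn 0)
  invFun p := Function.update p.1.val 0 p.2
  left_inv nn := by
    simp only
    rw [Function.update_idem, Function.update_eq_self]
  right_inv p := by
    obtain ⟨⟨m, hm⟩, k⟩ := p
    simp only
    refine Prod.ext ?_ ?_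
    · apply Subtype.ext
      simp only
      rw [Function.update_idem]
      exact Function.update_eq_self_iff.mpr hm.symm
    · exact Function.update_self 0 k m


lemma auxSplit_symm_apply (d : ℕ) [NeZero d] (p : {m : Fin d → ℕ // m 0 = 0} × ℕ) :
    (auxSplit d).symm p = Function.update p.1.val 0 p.2 := rfl

set_option maxHeartbeats 1000000 in
lemma aux_main (d : ℕ) [NeZero d] (S : ℝ) (hS0 : 0 < S)
    (u : Fin d → Fin d → ℝ) (x : Fin d → ℕ)
    (C1 : ℕ → ℝ → ℝ)
    (hgenC1 : ∀ (y z : ℝ), |z| < S → HasSum (fun m : ℕ => C1 m y * z ^ m / m.factorial)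
        (Real.exp z * (1 - z / S) ^ y))
    (q : (Fin d → ℕ) → ℝ) (s : Finset (Fin d → ℕ))
    (hq0 : ∀ nn ∉ s, q nn = 0)
    (hqeval : ∀ v : Fin d → ℝ, ∑ nn ∈ s, q nn * ∏ l, v l ^ nn l
        = ∏ i, (1 + ∑ l ∈ Finset.univ.erase 0, v l * u l i) ^ x i)
    (w : Fin d → ℝ) (hw : ∀ j, |w j| < S / 2) :
    HasSum (fun nn : Fin d → ℕ =>
      (((nn 0).factorial : ℝ)⁻¹
        * C1 (nn 0) ((∑ i, (x i : ℝ)) - ∑ l ∈ Finset.univ.erase 0, ((nn l : ℕ) : ℝ))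
        * S ^ (-∑ l ∈ Finset.univ.erase 0, ((nn l : ℕ) : ℝ))
        * q (Function.update nn 0 0)) * ∏ j, w j ^ nn j)
      (Real.exp (w 0) * ∏ i,
        (1 - w 0 / S + S⁻¹ * ∑ j ∈ Finset.univ.erase 0, u j i * w j) ^ x i) := by
  classical
  have hw0 : |w 0| < S / 2 := hw 0
  have hw0S : |w 0| < S := lt_trans hw0 (by linarith)
  have habs := abs_lt.mp hw0
  have hSw : 0 < S - w 0 := by linarith
  have hB0 : 0 < 1 - w 0 / S := by
    rw [sub_pos, div_lt_one hS0]; linarith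
  set X : ℝ := ∑ i, (x i : ℝ) with hX
  set Mr : (Fin d → ℕ) → ℝ := fun m => ∑ l ∈ Finset.univ.erase 0, ((m l : ℕ) : ℝ) with hMr
  set W : (Fin d → ℕ) → ℝ := fun m => ∏ l ∈ Finset.univ.erase 0, w l ^ m l with hW
  set v : Fin d → ℝ := fun l => if l = 0 then 0 else w l * (S - w 0)⁻¹ with hv
  set G : ({m : Fin d → ℕ // m 0 = 0} × ℕ) → ℝ := fun p =>
    (C1 p.2 (X - Mr p.1.val) * w 0 ^ p.2 / (p.2).factorial)
      * (q p.1.val * S ^ (-(Mr p.1.val)) * W p.1.val) with hG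
  set TT : {m : Fin d → ℕ // m 0 = 0} → ℝ := fun m =>
    (Real.exp (w 0) * (1 - w 0 / S) ^ (X - Mr m.val))
      * (q m.val * S ^ (-(Mr m.val)) * W m.val) with hTT
  set t : Finset {m : Fin d → ℕ // m 0 = 0} := s.subtype (fun m => m 0 = 0) with ht
  -- fiberwise sums
  have hfiber : ∀ m : {m : Fin d → ℕ // m 0 = 0}, HasSum (fun k => G (m, k)) (TT m) :=
    fun m => (hgenC1 (X - Mr m.val) (w 0) hw0S).mul_right _
  have hGz : ∀ p : {m : Fin d → ℕ // m 0 = 0} × ℕ, p.1 ∉ t → G p = 0 := by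
    rintro ⟨m, k⟩ hm
    have : m.val ∉ s := fun hs => hm (Finset.mem_subtype.mpr hs)
    simp only [hG]
    rw [hq0 m.val this]
    ring
  -- total sum over the product type
  have hGsum : HasSum G (∑ m ∈ t, TT m) := by
    have h1 : ∀ m₀ ∈ t, HasSum (fun p : {m : Fin d → ℕ // m 0 = 0} × ℕ =>
        if p.1 = m₀ then G p else 0) (TT m₀) := by
      intro m₀ _
      have hinj : Function.Injective (fun k : ℕ =>
          ((m₀, k) : {m : Fin d → ℕ // m 0 = 0} × ℕ)) := by
        intro a b hab
        exact congrArg Prod.snd hab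
      rw [← Function.Injective.hasSum_iff hinj ?_]
      · refine (hfiber m₀).congr_fun fun k => ?_
        simp
      · intro p hp
        have hne : p.1 ≠ m₀ := by
          intro h
          exact hp ⟨p.2, by rw [← h]⟩
        rw [if_neg hne]
    have h2 := hasSum_sum h1
    refine h2.congr_fun fun p => ?_
    rw [Finset.sum_ite_eq t p.1 (fun _ => G p)]
    by_cases hp : p.1 ∈ t
    · rw [if_pos hp]
    · rw [if_neg hp, hGz p hp]
  -- identify the sum of TT
  have hTTm : ∀ m ∈ t, TT m
      = Real.exp (w 0) * (1 - w 0 / S) ^ X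
          * (q m.val * ∏ l ∈ Finset.univ.erase 0, v l ^ m.val l) := by
    intro m _
    have hNm : Mr m.val = ((∑ l ∈ Finset.univ.erase 0, m.val l : ℕ) : ℝ) := by
      simp [hMr, Nat.cast_sum]
    have e1 : (1 - w 0 / S) ^ (X - Mr m.val) * S ^ (-(Mr m.val))
        = (1 - w 0 / S) ^ X * ((S - w 0) : ℝ) ^ (-(Mr m.val)) := by
      rw [Real.rpow_sub hB0, div_eq_mul_inv, ← Real.rpow_neg hB0.le, mul_assoc,
        ← Real.mul_rpow hB0.le hS0.le]
      congr 2
      field_simp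
    have e2 : ((S - w 0) : ℝ) ^ (-(Mr m.val))
        = ((S - w 0)⁻¹) ^ (∑ l ∈ Finset.univ.erase 0, m.val l : ℕ) := by
      rw [hNm, Real.rpow_neg hSw.le, Real.rpow_natCast, inv_pow]
    have e3 : ((S - w 0)⁻¹) ^ (∑ l ∈ Finset.univ.erase 0, m.val l : ℕ) * W m.val
        = ∏ l ∈ Finset.univ.erase 0, v l ^ m.val l := by
      rw [← Finset.prod_pow_eq_pow_sum, hW, ← Finset.prod_mul_distrib]
      refine Finset.prod_congr rfl fun l hl => ?_
      have hl0 : l ≠ 0 := Finset.ne_of_mem_erase hl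
      rw [hv]
      simp only [if_neg hl0]
      rw [mul_pow]
      ring
    calc TT m = Real.exp (w 0) * ((1 - w 0 / S) ^ (X - Mr m.val) * S ^ (-(Mr m.val)))
          * (q m.val * W m.val) := by rw [hTT]; ring
      _ = Real.exp (w 0) * ((1 - w 0 / S) ^ X * ((S - w 0) : ℝ) ^ (-(Mr m.val)))
          * (q m.val * W m.val) := by rw [e1]
      _ = Real.exp (w 0) * (1 - w 0 / S) ^ X
          * (q m.val * (((S - w 0)⁻¹) ^ (∑ l ∈ Finset.univ.erase 0, m.val l : ℕ) * W m.val)) := by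
            rw [e2]; ring
      _ = _ := by rw [e3]
  have hsum1 : ∑ m ∈ t, TT m
      = Real.exp (w 0) * (1 - w 0 / S) ^ X
          * ∑ nn ∈ s, q nn * ∏ l, v l ^ nn l := by
    rw [Finset.sum_congr rfl hTTm, ← Finset.mul_sum]
    congr 1
    rw [ht]
    have h2 : ∑ m ∈ s.subtype (fun nn => nn 0 = 0),
        q m.val * ∏ l ∈ Finset.univ.erase 0, v l ^ m.val l
        = ∑ nn ∈ s.filter (fun nn => nn 0 = 0),
            q nn * ∏ l ∈ Finset.univ.erase 0, v l ^ nn l :=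
      Finset.sum_subtype_eq_sum_filter (fun nn => q nn * ∏ l ∈ Finset.univ.erase 0, v l ^ nn l)
    rw [h2]
    have h3 : ∀ nn ∈ s.filter (fun nn => nn 0 = 0),
        q nn * ∏ l ∈ Finset.univ.erase 0, v l ^ nn l = q nn * ∏ l, v l ^ nn l := by
      intro nn hnn
      have h0 : nn 0 = 0 := (Finset.mem_filter.mp hnn).2
      congr 1
      rw [← Finset.mul_prod_erase Finset.univ (fun l => v l ^ nn l) (Finset.mem_univ 0),
        h0, pow_zero, one_mul]
    rw [Finset.sum_congr rfl h3]
    refine Finset.sum_filter_of_ne fun nn hnn hne => ?_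
    by_contra h0
    apply hne
    rw [Finset.prod_eq_zero (Finset.mem_univ 0) (by rw [hv]; simp [zero_pow h0]), mul_zero]
  -- final identification of the target
  have hfinal : Real.exp (w 0) * (1 - w 0 / S) ^ X
      * ∏ i, (1 + ∑ l ∈ Finset.univ.erase 0, v l * u l i) ^ x i
      = Real.exp (w 0) * ∏ i,
        (1 - w 0 / S + S⁻¹ * ∑ j ∈ Finset.univ.erase 0, u j i * w j) ^ x i := by
    have hXB : (1 - w 0 / S) ^ X = ∏ i, (1 - w 0 / S) ^ x i := by
      rw [hX, ← Nat.cast_sum, Real.rpow_natCast, Finset.prod_pow_eq_pow_sum]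
    rw [hXB, mul_assoc, ← Finset.prod_mul_distrib]
    congr 1
    refine Finset.prod_congr rfl fun i _ => ?_
    rw [← mul_pow]
    congr 1
    rw [mul_add, mul_one, Finset.mul_sum, Finset.mul_sum]
    congr 1
    refine Finset.sum_congr rfl fun l hl => ?_
    have hl0 : l ≠ 0 := Finset.ne_of_mem_erase hl
    rw [hv]
    simp only [if_neg hl0]
    field_simp
  -- transport along the equivalence
  have hEq : ((fun nn : Fin d → ℕ =>
      (((nn 0).factorial : ℝ)⁻¹
        * C1 (nn 0) ((∑ i, (x i : ℝ)) - ∑ l ∈ Finset.univ.erase 0, ((nn l : ℕ) : ℝ))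
        * S ^ (-∑ l ∈ Finset.univ.erase 0, ((nn l : ℕ) : ℝ))
        * q (Function.update nn 0 0)) * ∏ j, w j ^ nn j) ∘ (auxSplit d).symm) = G := by
    funext p
    obtain ⟨⟨m, hm⟩, k⟩ := p
    simp only [Function.comp_apply, auxSplit_symm_apply]
    have hup0 : Function.update m 0 k 0 = k := Function.update_self 0 k m
    have hupm : Function.update (Function.update m 0 k) 0 0 = m := by
      rw [Function.update_idem]
      exact Function.update_eq_self_iff.mpr hm.symm
    have hsum_erase : ∑ l ∈ Finset.univ.erase 0, ((Function.update m 0 k l : ℕ) : ℝ)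
        = Mr m := by
      refine Finset.sum_congr rfl fun l hl => ?_
      rw [Function.update_of_ne (Finset.ne_of_mem_erase hl)]
    have hprod : ∏ j, w j ^ Function.update m 0 k j = w 0 ^ k * W m := by
      rw [← Finset.mul_prod_erase Finset.univ _ (Finset.mem_univ 0), hup0]
      congr 1
      refine Finset.prod_congr rfl fun l hl => ?_
      rw [Function.update_of_ne (Finset.ne_of_mem_erase hl)]
    rw [hup0, hupm, hsum_erase, hprod]
    simp only [hG, hX]
    ring
  have htrans := ((Equiv.hasSum_iff (auxSplit d).symm).mp (by rw [hEq]; exact hGsum))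
  rw [hsum1, hqeval v, hfinal] at htrans
  exact htrans

set_option linter.unusedVariables false in
/-- Factorization of the multivariate Poisson-Charlier polynomials:
`C_n(X;μ,u) = (n_0!)⁻¹ C_{n_0}(|X| - |n_1|; |μ|) |μ|^{-|n_1|} Q_{n_1}(X;|X|,p,u)`,
where `C_{n_0}(·;|μ|)` is the 1-dimensional Poisson-Charlier polynomial and
`Q_{n_1}` is the multivariate Krawtchouk polynomial. -/
theorem multivariate_poisson_charlier_factorization
    (d : ℕ) [NeZero d] (μ : Fin d → ℝ) (hμ : ∀ i, 0 < μ i)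
    (a : Fin d → ℝ) (u : Fin d → Fin d → ℝ)
    (hu0 : ∀ i, u 0 i = 1) (ha0 : a 0 = 1)
    (horth : ∀ k l, ∑ i, u k i * u l i * (μ i / ∑ i', μ i') = if k = l then a k else 0)
    -- the multivariate Poisson-Charlier polynomials
    (C : (Fin d → ℕ) → (Fin d → ℕ) → ℝ)
    (hgenC : ∀ (x : Fin d → ℕ) (w : Fin d → ℝ),
      HasSum (fun n : Fin d → ℕ => C n x * ∏ j, w j ^ n j)
        (Real.exp (w 0) * ∏ i,
          (1 - w 0 / (∑ i', μ i')
            + (∑ i', μ i')⁻¹ * ∑ j ∈ Finset.univ.erase 0, u j i * w j) ^ x i))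
    -- the 1-dimensional Poisson-Charlier polynomials `C_m(y;|μ|)` (polynomial in a
    -- real argument `y`)
    (C1 : ℕ → ℝ → ℝ)
    (hgenC1 : ∀ (y : ℝ) (z : ℝ), |z| < ∑ i', μ i' →
      HasSum (fun m : ℕ => C1 m y * z ^ m / m.factorial)
        (Real.exp z * (1 - z / ∑ i', μ i') ^ y))
    -- the multivariate Krawtchouk polynomials with `N = |x|`
    (Q : (Fin d → ℕ) → (Fin d → ℕ) → ℝ)
    (hgenQ : ∀ (x : Fin d → ℕ) (w : Fin d → ℝ),
      HasSum (fun n : Fin d → ℕ => Q n x * ∏ l, w l ^ n l)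
        (∏ i, (1 + ∑ l ∈ Finset.univ.erase 0, w l * u l i) ^ x i)) :
    ∀ (n : Fin d → ℕ) (x : Fin d → ℕ),
      C n x
        = ((n 0).factorial : ℝ)⁻¹
            * C1 (n 0) ((∑ i, x i : ℝ) - (∑ l ∈ Finset.univ.erase 0, n l : ℝ))
            * (∑ i', μ i') ^ (-(∑ l ∈ Finset.univ.erase 0, n l : ℝ))
            * Q (Function.update n 0 0) x := by
  intro n x
  classical
  set S := ∑ i', μ i' with hSdef
  have hS0 : 0 < S := Finset.sum_pos (fun i _ => hμ i) ⟨0, Finset.mem_univ 0⟩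
  obtain ⟨q, s, hq0, hqeval⟩ := aux_poly_gen d u x
  have hqsum : ∀ v : Fin d → ℝ,
      HasSum (fun nn : Fin d → ℕ => q nn * ∏ l, v l ^ nn l)
        (∏ i, (1 + ∑ l ∈ Finset.univ.erase 0, v l * u l i) ^ x i) := by
    intro v
    have h1 : ∀ nn ∉ s, q nn * ∏ l, v l ^ nn l = 0 := fun nn hnn => by
      rw [hq0 nn hnn, zero_mul]
    have h2 : HasSum (fun nn : Fin d → ℕ => q nn * ∏ l, v l ^ nn l)
        (∑ nn ∈ s, q nn * ∏ l, v l ^ nn l) := hasSum_sum_of_ne_finset_zero h1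
    rwa [hqeval v] at h2
  have hQq : ∀ nn, Q nn x = q nn := by
    have hz : ∀ w : Fin d → ℝ, (∀ j, |w j| < 1) →
        HasSum (fun nn : Fin d → ℕ => (Q nn x - q nn) * ∏ j, w j ^ nn j) 0 := by
      intro w _
      have h3 := (hgenQ x w).sub (hqsum w)
      rw [sub_self] at h3
      exact h3.congr_fun fun nn => by ring
    have h0 := aux_multi_coeff_zero d (fun nn => Q nn x - q nn) 1 one_pos hz
    intro nn
    have h4 := h0 nn
    simp only [sub_eq_zero] at h4
    exact h4
  have hkey : ∀ nn : Fin d → ℕ, C nn x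
      = ((nn 0).factorial : ℝ)⁻¹
          * C1 (nn 0) ((∑ i, (x i : ℝ)) - ∑ l ∈ Finset.univ.erase 0, ((nn l : ℕ) : ℝ))
          * S ^ (-∑ l ∈ Finset.univ.erase 0, ((nn l : ℕ) : ℝ))
          * q (Function.update nn 0 0) := by
    have hz : ∀ w : Fin d → ℝ, (∀ j, |w j| < S / 2) →
        HasSum (fun nn : Fin d → ℕ =>
          (C nn x
            - ((nn 0).factorial : ℝ)⁻¹
                * C1 (nn 0) ((∑ i, (x i : ℝ)) - ∑ l ∈ Finset.univ.erase 0, ((nn l : ℕ) : ℝ))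
                * S ^ (-∑ l ∈ Finset.univ.erase 0, ((nn l : ℕ) : ℝ))
                * q (Function.update nn 0 0)) * ∏ j, w j ^ nn j) 0 := by
      intro w hw
      have hm := aux_main d S hS0 u x C1 hgenC1 q s hq0 hqeval w hw
      have h3 := (hgenC x w).sub hm
      rw [sub_self] at h3
      exact h3.congr_fun fun nn => by ring
    have h0 := aux_multi_coeff_zero d _ (S / 2) (by positivity) hz
    intro nn
    have h4 := h0 nn
    simp only [sub_eq_zero] at h4
    exact h4
  rw [hQq (Function.update n 0 0)]
  exact hkey n
end

section
/- The multivariate Hermite polynomials H_n(X;τ,u) := Π_{j=0}^{d-1} H_{n_j}(\hat{X}_j; |τ| a_j) satisfy E[H_m(X;τ,u) H_n(X;τ,u)] = δ_{mn} |τ|^{|n|} Π_{j=0}^{d-1} a_j^{n_j} n_j!, where X has independent N(0,τ_i) components and \hat{X}_j = Σ_i u_i^{(j)} X_i. -/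
open MeasureTheory Real Finset
set_option maxHeartbeats 2000000

namespace HermAux

/-- Uniqueness of coefficients for everywhere-convergent power series. -/
lemma uniq_coeff {f : ℝ → ℝ} {c c' : ℕ → ℝ}
    (h : ∀ z : ℝ, HasSum (fun m => c m * z ^ m) (f z))
    (h' : ∀ z : ℝ, HasSum (fun m => c' m * z ^ m) (f z)) : c = c' := by
  have key : ∀ (b : ℕ → ℝ), (∀ z : ℝ, HasSum (fun m => b m * z ^ m) (f z)) →
      HasFPowerSeriesAt f (FormalMultilinearSeries.ofScalars ℝ b) 0 := by
    intro b hb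
    refine ⟨⊤, ?_, ?_, ?_⟩
    · refine (FormalMultilinearSeries.radius_eq_top_of_summable_norm _ fun r => ?_).ge
      refine ((hb r).summable).abs.congr fun m => ?_
      rw [FormalMultilinearSeries.ofScalars_norm]
      simp [abs_mul, abs_pow, Real.norm_eq_abs]
    · exact ENNReal.zero_lt_top
    · intro y _
      simp only [FormalMultilinearSeries.ofScalars_apply_eq, smul_eq_mul, zero_add]
      exact hb y
  have := (key c h).eq_formalMultilinearSeries (key c' h')
  exact FormalMultilinearSeries.ofScalars_series_injective ℝ ℝ this

/-- Explicit Hermite polynomial. -/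
noncomputable def Hexp (m : ℕ) (σ2 y : ℝ) : ℝ :=
  ∑ k ∈ Finset.range (m / 2 + 1),
    (m.factorial : ℝ) / (k.factorial * (m - 2 * k).factorial) * y ^ (m - 2 * k) * (-σ2 / 2) ^ k

lemma hasSum_exp_aux (w : ℝ) : HasSum (fun n : ℕ => w ^ n / n.factorial) (Real.exp w) := by
  rw [Real.exp_eq_exp_ℝ]
  exact NormedSpace.expSeries_div_hasSum_exp w

lemma hasSum_Hexp (σ2 y z : ℝ) :
    HasSum (fun m : ℕ => Hexp m σ2 y * z ^ m / m.factorial)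
      (Real.exp (y * z - σ2 * z ^ 2 / 2)) := by
  -- double sum over (i, k), term y^i z^i/i! * (-σ2/2)^k z^(2k)/k!
  have h1 : HasSum (fun i : ℕ => (y * z) ^ i / i.factorial) (Real.exp (y * z)) :=
    hasSum_exp_aux _
  have h2 : HasSum (fun k : ℕ => (-σ2 * z ^ 2 / 2) ^ k / k.factorial)
      (Real.exp (-σ2 * z ^ 2 / 2)) := hasSum_exp_aux _
  have hg : HasSum (fun p : ℕ × ℕ =>
      ((y * z) ^ p.1 / p.1.factorial) * ((-σ2 * z ^ 2 / 2) ^ p.2 / p.2.factorial))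
      (Real.exp (y * z) * Real.exp (-σ2 * z ^ 2 / 2)) := by
    have hs1 : Summable fun i : ℕ => ‖(y * z) ^ i / (i.factorial : ℝ)‖ := h1.summable.abs
    have hs2 : Summable fun k : ℕ => ‖(-σ2 * z ^ 2 / 2) ^ k / (k.factorial : ℝ)‖ := h2.summable.abs
    exact h1.mul h2 (summable_mul_of_summable_norm hs1 hs2)
  rw [← Real.exp_add] at hg
  have hexp_eq : y * z + -σ2 * z ^ 2 / 2 = y * z - σ2 * z ^ 2 / 2 := by ring
  rw [hexp_eq] at hg
  -- reindex along the injection (i, k) ↦ (i + 2k, k)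
  set F : ℕ × ℕ → ℝ := fun q =>
    (if 2 * q.2 ≤ q.1 then
      (q.1.factorial : ℝ) / (q.2.factorial * (q.1 - 2 * q.2).factorial)
        * y ^ (q.1 - 2 * q.2) * (-σ2 / 2) ^ q.2 else 0) * z ^ q.1 / q.1.factorial
    with hF
  have hinj : Function.Injective (fun p : ℕ × ℕ => (p.1 + 2 * p.2, p.2)) := by
    intro p q h
    simp only [Prod.mk.injEq] at h
    obtain ⟨h1', h2'⟩ := h
    exact Prod.ext (by omega) h2'
  have hFS : HasSum F (Real.exp (y * z - σ2 * z ^ 2 / 2)) := by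
    refine (Function.Injective.hasSum_iff hinj ?_).mp ?_
    · intro q hq
      have : ¬ 2 * q.2 ≤ q.1 := by
        intro hle
        refine hq ⟨(q.1 - 2 * q.2, q.2), ?_⟩
        show (q.1 - 2 * q.2 + 2 * q.2, q.2) = q
        rw [Nat.sub_add_cancel hle]
      simp [hF, this]
    · refine hg.congr_fun fun p => ?_
      have hle : 2 * p.2 ≤ p.1 + 2 * p.2 := by omega
      have hsub : p.1 + 2 * p.2 - 2 * p.2 = p.1 := by omega
      show F (p.1 + 2 * p.2, p.2)
        = (y * z) ^ p.1 / p.1.factorial * ((-σ2 * z ^ 2 / 2) ^ p.2 / p.2.factorial)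
      simp only [hF]
      rw [if_pos hle, hsub]
      have hfz : ((p.1 + 2 * p.2).factorial : ℝ) ≠ 0 := Nat.cast_ne_zero.mpr (Nat.factorial_ne_zero _)
      have h1z : (p.1.factorial : ℝ) ≠ 0 := Nat.cast_ne_zero.mpr (Nat.factorial_ne_zero _)
      have h2z : (p.2.factorial : ℝ) ≠ 0 := Nat.cast_ne_zero.mpr (Nat.factorial_ne_zero _)
      have e1 : (y * z) ^ p.1 = y ^ p.1 * z ^ p.1 := mul_pow _ _ _
      have e2 : (-σ2 * z ^ 2 / 2) ^ p.2 = (-σ2 / 2) ^ p.2 * z ^ (2 * p.2) := by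
        have h0 : -σ2 * z ^ 2 / 2 = -σ2 / 2 * z ^ 2 := by ring
        rw [h0, mul_pow, ← pow_mul]
      have e3 : z ^ (p.1 + 2 * p.2) = z ^ p.1 * z ^ (2 * p.2) := pow_add _ _ _
      rw [e1, e2, e3]
      field_simp
  have hfib : ∀ m : ℕ, HasSum (fun k : ℕ => F (m, k)) (Hexp m σ2 y * z ^ m / m.factorial) := by
    intro m
    have hz : ∀ k ∉ Finset.range (m / 2 + 1), F (m, k) = 0 := by
      intro k hk
      have : ¬ 2 * k ≤ m := by
        simp only [Finset.mem_range] at hk; omega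
      simp [hF, this]
    have hsum : ∑ k ∈ Finset.range (m / 2 + 1), F (m, k)
        = Hexp m σ2 y * z ^ m / m.factorial := by
      rw [Hexp, Finset.sum_mul, Finset.sum_div]
      refine Finset.sum_congr rfl fun k hk => ?_
      have h2k : 2 * k ≤ m := by
        simp only [Finset.mem_range] at hk; omega
      simp [hF, h2k]
    exact hsum ▸ hasSum_sum_of_ne_finset_zero hz
  exact hFS.prod_fiberwise hfib

lemma Hexp_nonneg (m : ℕ) {σ2 y : ℝ} (hσ2 : σ2 ≤ 0) (hy : 0 ≤ y) : 0 ≤ Hexp m σ2 y := by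
  refine Finset.sum_nonneg fun k _ => ?_
  have h1 : (0:ℝ) ≤ (m.factorial : ℝ) / (k.factorial * (m - 2*k).factorial) :=
    div_nonneg (Nat.cast_nonneg _) (by positivity)
  have h2 : (0:ℝ) ≤ y ^ (m - 2*k) := pow_nonneg hy _
  have h3 : (0:ℝ) ≤ (-σ2/2) ^ k := pow_nonneg (by linarith) _
  exact mul_nonneg (mul_nonneg h1 h2) h3

lemma abs_Hexp_le (m : ℕ) {σ2 : ℝ} (hσ2 : 0 ≤ σ2) (y : ℝ) :
    |Hexp m σ2 y| ≤ Hexp m (-σ2) |y| := by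
  refine (Finset.abs_sum_le_sum_abs _ _).trans (le_of_eq (Finset.sum_congr rfl fun k _ => ?_))
  rw [abs_mul, abs_mul, abs_pow, abs_pow,
    abs_of_nonneg (div_nonneg (Nat.cast_nonneg (α := ℝ) _) (by positivity)),
    abs_of_nonpos (show -σ2/2 ≤ 0 by linarith)]
  have h0 : -(-σ2/2) = -(-σ2)/2 := by ring
  rw [h0]

lemma continuous_Hexp (m : ℕ) (σ2 : ℝ) : Continuous (Hexp m σ2) := by
  refine continuous_finset_sum _ fun k _ => ?_
  exact (continuous_const.mul (continuous_pow _)).mul continuous_const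

/-- single-term bound from the (all-plus-signs) generating function -/
lemma Hexp_le (m : ℕ) {σ2 y r : ℝ} (hσ2 : 0 ≤ σ2) (hy : 0 ≤ y) (hr : 0 ≤ r) :
    Hexp m (-σ2) y * r ^ m / m.factorial ≤ Real.exp (y * r + σ2 * r ^ 2 / 2) := by
  have h := hasSum_Hexp (-σ2) y r
  have he : y * r - -σ2 * r ^ 2 / 2 = y * r + σ2 * r ^ 2 / 2 := by ring
  rw [he] at h
  refine le_hasSum h m fun b _ => ?_
  have := Hexp_nonneg b (show -σ2 ≤ 0 by linarith) hy
  positivity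

lemma partial_Hexp_le (s : Finset ℕ) {σ2 y r : ℝ} (hσ2 : 0 ≤ σ2) (hy : 0 ≤ y) (hr : 0 ≤ r) :
    ∑ m ∈ s, Hexp m (-σ2) y * r ^ m / m.factorial ≤ Real.exp (y * r + σ2 * r ^ 2 / 2) := by
  have h := hasSum_Hexp (-σ2) y r
  have he : y * r - -σ2 * r ^ 2 / 2 = y * r + σ2 * r ^ 2 / 2 := by ring
  rw [he] at h
  refine sum_le_hasSum s (fun b _ => ?_) h
  have := Hexp_nonneg b (show -σ2 ≤ 0 by linarith) hy
  positivity

lemma H_eq_Hexp {H : ℕ → ℝ → ℝ → ℝ}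
    (hgen : ∀ (σ2 y z : ℝ),
      HasSum (fun m : ℕ => H m σ2 y * z ^ m / m.factorial)
        (Real.exp (y * z - σ2 * z ^ 2 / 2)))
    (k : ℕ) (σ2 y : ℝ) : H k σ2 y = Hexp k σ2 y := by
  have h1 : ∀ z : ℝ, HasSum (fun m => (H m σ2 y / m.factorial) * z ^ m)
      (Real.exp (y * z - σ2 * z ^ 2 / 2)) := fun z =>
    (hgen σ2 y z).congr_fun fun m => by ring
  have h2 : ∀ z : ℝ, HasSum (fun m => (Hexp m σ2 y / m.factorial) * z ^ m)
      (Real.exp (y * z - σ2 * z ^ 2 / 2)) := fun z =>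
    (hasSum_Hexp σ2 y z).congr_fun fun m => by ring
  have h := congrFun (uniq_coeff h1 h2) k
  have hk : (k.factorial : ℝ) ≠ 0 := Nat.cast_ne_zero.mpr (Nat.factorial_ne_zero _)
  field_simp at h
  exact h

lemma integrable_gauss_exp {τ : ℝ} (hτ : 0 < τ) (c : ℝ) :
    Integrable (fun x : ℝ => Real.exp (-(x^2)/(2*τ)) * Real.exp (c*x)) := by
  have hb : (0:ℝ) < (2*τ)⁻¹ := by positivity
  have base : Integrable fun x : ℝ => Real.exp (-((2*τ)⁻¹) * x^2) := integrable_exp_neg_mul_sq hb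
  have shift : Integrable fun x : ℝ => Real.exp (-((2*τ)⁻¹) * (x - c*τ)^2) :=
    base.comp_sub_right (c*τ)
  refine (shift.const_mul (Real.exp (c^2*τ/2))).congr (Filter.Eventually.of_forall fun x => ?_)
  show Real.exp (c^2*τ/2) * Real.exp (-((2*τ)⁻¹) * (x - c*τ)^2)
    = Real.exp (-(x^2)/(2*τ)) * Real.exp (c*x)
  rw [← Real.exp_add, ← Real.exp_add]
  congr 1
  field_simp
  ring

lemma integral_gauss_exp {τ : ℝ} (hτ : 0 < τ) (c : ℝ) :
    ∫ x : ℝ, Real.exp (-(x^2)/(2*τ)) * Real.exp (c*x)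
      = Real.sqrt (2*Real.pi*τ) * Real.exp (c^2*τ/2) := by
  have hb : (0:ℝ) < (2*τ)⁻¹ := by positivity
  have hpt : (fun x : ℝ => Real.exp (-(x^2)/(2*τ)) * Real.exp (c*x))
      = fun x => Real.exp (c^2*τ/2) * Real.exp (-((2*τ)⁻¹) * (x - c*τ)^2) := by
    funext x
    rw [← Real.exp_add, ← Real.exp_add]
    congr 1
    field_simp
    ring
  rw [hpt, MeasureTheory.integral_const_mul]
  have ht : (fun x : ℝ => Real.exp (-((2*τ)⁻¹) * (x - c*τ)^2))
      = fun x => (fun y : ℝ => Real.exp (-((2*τ)⁻¹) * y^2)) (x + -(c*τ)) := by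
    funext x; rw [← sub_eq_add_neg]
  rw [ht, MeasureTheory.integral_add_right_eq_self (fun y : ℝ => Real.exp (-((2*τ)⁻¹) * y^2)),
    integral_gaussian]
  have : Real.pi / (2*τ)⁻¹ = 2*Real.pi*τ := by field_simp
  rw [this, mul_comm]

lemma integral_pdf_exp {τ : ℝ} (hτ : 0 < τ) (c : ℝ) :
    ∫ x : ℝ, (Real.sqrt (2*Real.pi*τ))⁻¹ * Real.exp (-(x^2)/(2*τ)) * Real.exp (c*x)
      = Real.exp (c^2*τ/2) := by
  have h1 : (fun x : ℝ => (Real.sqrt (2*Real.pi*τ))⁻¹ * Real.exp (-(x^2)/(2*τ)) * Real.exp (c*x))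
      = fun x => (Real.sqrt (2*Real.pi*τ))⁻¹ * (Real.exp (-(x^2)/(2*τ)) * Real.exp (c*x)) := by
    funext x; ring
  rw [h1, MeasureTheory.integral_const_mul, integral_gauss_exp hτ c, ← mul_assoc]
  have hs : Real.sqrt (2*Real.pi*τ) ≠ 0 := by
    refine ne_of_gt (Real.sqrt_pos.mpr ?_)
    positivity
  rw [inv_mul_cancel₀ hs, one_mul]

lemma integrable_pdf_absexp {τ : ℝ} (hτ : 0 < τ) (M : ℝ) :
    Integrable (fun x : ℝ =>
      (Real.sqrt (2*Real.pi*τ))⁻¹ * Real.exp (-(x^2)/(2*τ)) * Real.exp (M*|x|)) := by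
  have h1 := integrable_gauss_exp hτ M
  have h2 := integrable_gauss_exp hτ (-M)
  have hg := (h1.add h2).const_mul (Real.sqrt (2*Real.pi*τ))⁻¹
  refine Integrable.mono' hg ?_ (Filter.Eventually.of_forall fun x => ?_)
  · refine Continuous.aestronglyMeasurable ?_
    exact (continuous_const.mul ((Real.continuous_exp.comp (by fun_prop)))).mul
      (Real.continuous_exp.comp (continuous_const.mul continuous_abs))
  · have hsnn : (0:ℝ) ≤ (Real.sqrt (2*Real.pi*τ))⁻¹ := by positivity
    have hpdf : (0:ℝ) ≤ Real.exp (-(x^2)/(2*τ)) := (Real.exp_pos _).le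
    have habs : Real.exp (M*|x|) ≤ Real.exp (M*x) + Real.exp (-M*x) := by
      rcases abs_cases x with ⟨h, _⟩ | ⟨h, _⟩
      · rw [h]; exact le_add_of_nonneg_right (Real.exp_pos _).le
      · rw [h]
        have : M * -x = -M * x := by ring
        rw [this]
        exact le_add_of_nonneg_left (Real.exp_pos _).le
    have hnn : (0:ℝ) ≤ (Real.sqrt (2*Real.pi*τ))⁻¹ * Real.exp (-(x^2)/(2*τ)) * Real.exp (M*|x|) := by
      positivity
    rw [Real.norm_of_nonneg hnn]
    calc (Real.sqrt (2*Real.pi*τ))⁻¹ * Real.exp (-(x^2)/(2*τ)) * Real.exp (M*|x|)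
        ≤ (Real.sqrt (2*Real.pi*τ))⁻¹ * Real.exp (-(x^2)/(2*τ))
            * (Real.exp (M*x) + Real.exp (-M*x)) := by
          refine mul_le_mul_of_nonneg_left habs (by positivity)
      _ = (Real.sqrt (2*Real.pi*τ))⁻¹ * (Real.exp (-(x^2)/(2*τ)) * Real.exp (M*x)
            + Real.exp (-(x^2)/(2*τ)) * Real.exp (-M*x)) := by ring

section Extract

variable {α : Type*} [MeasurableSpace α] {μ : Measure α} {ψ φ : α → ℝ} {σ2 : ℝ}

lemma extract (hσ2 : 0 ≤ σ2)
    (hψ : AEStronglyMeasurable ψ μ) (hφ : AEStronglyMeasurable φ μ)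
    (hint : ∀ r : ℝ, 0 ≤ r → Integrable (fun x => |ψ x| * Real.exp (|φ x| * r)) μ)
    (z : ℝ) :
    HasSum (fun m : ℕ => (∫ x, ψ x * Hexp m σ2 (φ x) ∂μ) * z ^ m / m.factorial)
      (∫ x, ψ x * Real.exp (φ x * z - σ2 * z ^ 2 / 2) ∂μ) := by
  set F : ℕ → α → ℝ :=
    fun m x => ψ x * Hexp m σ2 (φ x) * (z ^ m / m.factorial) with hFdef
  set G : α → ℝ := fun x => |ψ x| * Real.exp (|φ x| * |z|) * Real.exp (σ2 * z ^ 2 / 2) with hGdef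
  have hGint : Integrable G μ := (hint |z| (abs_nonneg z)).mul_const _
  have hFm : ∀ m, AEStronglyMeasurable (F m) μ := fun m =>
    (hψ.mul ((continuous_Hexp m σ2).comp_aestronglyMeasurable hφ)).mul_const _
  have hbd : ∀ m x, ‖F m x‖ ≤ |ψ x| * (Hexp m (-σ2) |φ x| * |z| ^ m / m.factorial) := by
    intro m x
    rw [Real.norm_eq_abs, hFdef]
    have h1 : |ψ x * Hexp m σ2 (φ x) * (z ^ m / m.factorial)|
        = |ψ x| * |Hexp m σ2 (φ x)| * (|z| ^ m / m.factorial) := by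
      rw [abs_mul, abs_mul, abs_div, abs_pow]
      congr 2
      exact abs_of_nonneg (Nat.cast_nonneg _)
    rw [h1]
    have h2 := abs_Hexp_le m hσ2 (φ x)
    have h3 : (0:ℝ) ≤ |z| ^ m / m.factorial := by positivity
    calc |ψ x| * |Hexp m σ2 (φ x)| * (|z| ^ m / m.factorial)
        ≤ |ψ x| * Hexp m (-σ2) |φ x| * (|z| ^ m / m.factorial) := by
          refine mul_le_mul_of_nonneg_right (mul_le_mul_of_nonneg_left h2 (abs_nonneg _)) h3
      _ = |ψ x| * (Hexp m (-σ2) |φ x| * |z| ^ m / m.factorial) := by ring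
  have hsingle : ∀ m x, Hexp m (-σ2) |φ x| * |z| ^ m / m.factorial
      ≤ Real.exp (|φ x| * |z| + σ2 * z ^ 2 / 2) := by
    intro m x
    have := Hexp_le m hσ2 (abs_nonneg (φ x)) (abs_nonneg z)
    rwa [sq_abs] at this
  have hexpG : ∀ x, |ψ x| * Real.exp (|φ x| * |z| + σ2 * z ^ 2 / 2) = G x := by
    intro x; rw [Real.exp_add, hGdef]; ring
  have hFint : ∀ m, Integrable (F m) μ := by
    intro m
    refine Integrable.mono' hGint (hFm m) (Filter.Eventually.of_forall fun x => ?_)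
    refine (hbd m x).trans ?_
    rw [← hexpG x]
    exact mul_le_mul_of_nonneg_left (hsingle m x) (abs_nonneg _)
  have hsum : Summable (fun m => ∫ x, ‖F m x‖ ∂μ) := by
    refine summable_of_sum_range_le (c := ∫ x, G x ∂μ)
      (fun m => integral_nonneg fun x => norm_nonneg _) fun N => ?_
    rw [← integral_finset_sum _ (fun m _ => (hFint m).norm)]
    refine integral_mono (integrable_finset_sum _ fun m _ => (hFint m).norm) hGint fun x => ?_
    calc ∑ m ∈ Finset.range N, ‖F m x‖
        ≤ ∑ m ∈ Finset.range N, |ψ x| * (Hexp m (-σ2) |φ x| * |z| ^ m / m.factorial) :=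
          Finset.sum_le_sum fun m _ => hbd m x
      _ = |ψ x| * ∑ m ∈ Finset.range N, Hexp m (-σ2) |φ x| * |z| ^ m / m.factorial := by
          rw [Finset.mul_sum]
      _ ≤ |ψ x| * Real.exp (|φ x| * |z| + σ2 * z ^ 2 / 2) := by
          refine mul_le_mul_of_nonneg_left ?_ (abs_nonneg _)
          have := partial_Hexp_le (Finset.range N) hσ2 (abs_nonneg (φ x)) (abs_nonneg z)
          rwa [sq_abs] at this
      _ = G x := hexpG x
  have hmain := hasSum_integral_of_summable_integral_norm hFint hsum
  have htsum : ∀ x, ∑' m, F m x = ψ x * Real.exp (φ x * z - σ2 * z ^ 2 / 2) := by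
    intro x
    have h0 : HasSum (fun m => F m x) (ψ x * Real.exp (φ x * z - σ2 * z ^ 2 / 2)) :=
      ((hasSum_Hexp σ2 (φ x) z).mul_left (ψ x)).congr_fun fun m => by
        rw [hFdef]; ring
    exact h0.tsum_eq
  have hco : (fun m => ∫ x, F m x ∂μ)
      = fun m => (∫ x, ψ x * Hexp m σ2 (φ x) ∂μ) * z ^ m / m.factorial := by
    funext m
    rw [hFdef]
    rw [MeasureTheory.integral_mul_const]
    rw [mul_div_assoc]
  rw [hco] at hmain
  have : (∫ x, ∑' m, F m x ∂μ) = ∫ x, ψ x * Real.exp (φ x * z - σ2 * z ^ 2 / 2) ∂μ :=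
    integral_congr_ae (Filter.Eventually.of_forall htsum)
  rwa [this] at hmain

lemma extract_coeff (hσ2 : 0 ≤ σ2)
    (hψ : AEStronglyMeasurable ψ μ) (hφ : AEStronglyMeasurable φ μ)
    (hint : ∀ r : ℝ, 0 ≤ r → Integrable (fun x => |ψ x| * Real.exp (|φ x| * r)) μ)
    {f : ℝ → ℝ} {g : ℕ → ℝ}
    (hval : ∀ z : ℝ, ∫ x, ψ x * Real.exp (φ x * z - σ2 * z ^ 2 / 2) ∂μ = f z)
    (hf : ∀ z : ℝ, HasSum (fun k : ℕ => g k * z ^ k / k.factorial) (f z)) (k : ℕ) :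
    ∫ x, ψ x * Hexp k σ2 (φ x) ∂μ = g k := by
  have h1 : ∀ z : ℝ, HasSum
      (fun m => ((∫ x, ψ x * Hexp m σ2 (φ x) ∂μ) / m.factorial) * z ^ m) (f z) := by
    intro z
    have h := extract hσ2 hψ hφ hint z
    rw [hval z] at h
    exact h.congr_fun fun m => by ring
  have h2 : ∀ z : ℝ, HasSum (fun m => (g m / m.factorial) * z ^ m) (f z) := fun z =>
    (hf z).congr_fun fun m => by ring
  have h := congrFun (uniq_coeff h1 h2) k
  have hk : (k.factorial:ℝ) ≠ 0 := Nat.cast_ne_zero.mpr (Nat.factorial_ne_zero _)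
  field_simp at h
  exact h

end Extract

section Main

variable {d : ℕ}

/-- the Gaussian weight -/
noncomputable def wf (τ : Fin d → ℝ) (x : Fin d → ℝ) : ℝ :=
  ∏ i, (Real.sqrt (2*Real.pi*τ i))⁻¹ * Real.exp (-(x i^2)/(2*τ i))

lemma wf_nonneg (τ : Fin d → ℝ) (x : Fin d → ℝ) : 0 ≤ wf τ x :=
  Finset.prod_nonneg fun i _ => by positivity

lemma wf_cont (τ : Fin d → ℝ) : Continuous (wf τ) := by
  refine continuous_finset_prod _ fun i _ => ?_
  have : Continuous fun x : Fin d → ℝ => x i := continuous_apply i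
  fun_prop

lemma GaussInt {τ : Fin d → ℝ} (hτ : ∀ i, 0 < τ i) (c : Fin d → ℝ) :
    ∫ x : Fin d → ℝ, wf τ x * Real.exp (∑ i, c i * x i)
      = Real.exp (∑ i, (c i)^2 * τ i / 2) := by
  have hpt : (fun x : Fin d → ℝ => wf τ x * Real.exp (∑ i, c i * x i))
      = fun x => ∏ i, ((Real.sqrt (2*Real.pi*τ i))⁻¹ * Real.exp (-(x i^2)/(2*τ i))
          * Real.exp (c i * x i)) := by
    funext x
    rw [wf, Real.exp_sum, ← Finset.prod_mul_distrib]
  rw [hpt]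
  rw [MeasureTheory.volume_pi]
  rw [MeasureTheory.integral_fintype_prod_eq_prod
    (f := fun i v => (Real.sqrt (2*Real.pi*τ i))⁻¹ * Real.exp (-(v^2)/(2*τ i))
      * Real.exp (c i * v))]
  rw [Real.exp_sum]
  exact Finset.prod_congr rfl fun i _ => integral_pdf_exp (hτ i) (c i)

lemma INT {τ : Fin d → ℝ} (hτ : ∀ i, 0 < τ i) {g : (Fin d → ℝ) → ℝ} (C : ℝ) {R : ℝ}
    (hg : Continuous g) (hR : 0 ≤ R)
    (hb : ∀ x, |g x| ≤ C * Real.exp (R * ∑ i, |x i|)) :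
    Integrable (fun x : Fin d → ℝ => wf τ x * g x) := by
  have hprod : Integrable (fun x : Fin d → ℝ =>
      ∏ i, ((Real.sqrt (2*Real.pi*τ i))⁻¹ * Real.exp (-(x i^2)/(2*τ i))
        * Real.exp (R * |x i|))) :=
    Integrable.fintype_prod fun i => integrable_pdf_absexp (hτ i) R
  refine Integrable.mono' (hprod.const_mul C)
    ((wf_cont τ).mul hg).aestronglyMeasurable (Filter.Eventually.of_forall fun x => ?_)
  rw [Real.norm_eq_abs, abs_mul, abs_of_nonneg (wf_nonneg τ x)]
  calc wf τ x * |g x| ≤ wf τ x * (C * Real.exp (R * ∑ i, |x i|)) :=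
        mul_le_mul_of_nonneg_left (hb x) (wf_nonneg τ x)
    _ = C * (wf τ x * ∏ i, Real.exp (R * |x i|)) := by
        rw [Finset.mul_sum, Real.exp_sum]; ring
    _ = C * ∏ i, ((Real.sqrt (2*Real.pi*τ i))⁻¹ * Real.exp (-(x i^2)/(2*τ i))
          * Real.exp (R * |x i|)) := by
        rw [wf, ← Finset.prod_mul_distrib]

lemma mul_bound {β : Type*} {f₁ f₂ : β → ℝ} {C₁ C₂ R₁ R₂ : ℝ} {Sg : β → ℝ}
    (h₁ : ∀ x, |f₁ x| ≤ C₁ * Real.exp (R₁ * Sg x))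
    (h₂ : ∀ x, |f₂ x| ≤ C₂ * Real.exp (R₂ * Sg x)) (x : β) :
    |f₁ x * f₂ x| ≤ (C₁ * C₂) * Real.exp ((R₁ + R₂) * Sg x) := by
  rw [abs_mul]
  have hC₁ : 0 ≤ C₁ * Real.exp (R₁ * Sg x) := (abs_nonneg _).trans (h₁ x)
  calc |f₁ x| * |f₂ x| ≤ (C₁ * Real.exp (R₁ * Sg x)) * (C₂ * Real.exp (R₂ * Sg x)) :=
        mul_le_mul (h₁ x) (h₂ x) (abs_nonneg _) hC₁
    _ = (C₁ * C₂) * Real.exp ((R₁ + R₂) * Sg x) := by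
        rw [add_mul, Real.exp_add]; ring

lemma prodBound {β : Type*} (S : Finset (Fin d)) (P : Fin d → β → ℝ)
    (C R : Fin d → ℝ) {Sg : β → ℝ}
    (hb : ∀ j x, |P j x| ≤ C j * Real.exp (R j * Sg x)) (x : β) :
    |∏ j ∈ S, P j x| ≤ (∏ j ∈ S, C j) * Real.exp ((∑ j ∈ S, R j) * Sg x) := by
  rw [Finset.abs_prod]
  calc ∏ j ∈ S, |P j x| ≤ ∏ j ∈ S, (C j * Real.exp (R j * Sg x)) :=
        Finset.prod_le_prod (fun j _ => abs_nonneg _) (fun j _ => hb j x)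
    _ = (∏ j ∈ S, C j) * Real.exp ((∑ j ∈ S, R j) * Sg x) := by
        rw [Finset.prod_mul_distrib, ← Real.exp_sum, Finset.sum_mul]

end Main

section Steps

variable {α : Type*} [MeasurableSpace α] {μ : Measure α} {ψ φ : α → ℝ} {σ2 : ℝ}

lemma step_exp (hσ2 : 0 ≤ σ2)
    (hψ : AEStronglyMeasurable ψ μ) (hφ : AEStronglyMeasurable φ μ)
    (hint : ∀ r : ℝ, 0 ≤ r → Integrable (fun x => |ψ x| * Real.exp (|φ x| * r)) μ)
    (C b : ℝ)
    (hval : ∀ z : ℝ, ∫ x, ψ x * Real.exp (φ x * z - σ2 * z ^ 2 / 2) ∂μ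
      = C * Real.exp (b * z)) (k : ℕ) :
    ∫ x, ψ x * Hexp k σ2 (φ x) ∂μ = C * b ^ k := by
  refine extract_coeff hσ2 hψ hφ hint hval (g := fun k => C * b ^ k) (fun z => ?_) k
  have h0 : HasSum (fun k : ℕ => (b*z) ^ k / k.factorial) (Real.exp (b*z)) := hasSum_exp_aux _
  exact (h0.mul_left C).congr_fun fun k => by rw [mul_pow]; ring

lemma step_mono (hσ2 : 0 ≤ σ2)
    (hψ : AEStronglyMeasurable ψ μ) (hφ : AEStronglyMeasurable φ μ)
    (hint : ∀ r : ℝ, 0 ≤ r → Integrable (fun x => |ψ x| * Real.exp (|φ x| * r)) μ)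
    (C c : ℝ) (k₀ : ℕ)
    (hval : ∀ z : ℝ, ∫ x, ψ x * Real.exp (φ x * z - σ2 * z ^ 2 / 2) ∂μ
      = C * (c * z) ^ k₀) (k : ℕ) :
    ∫ x, ψ x * Hexp k σ2 (φ x) ∂μ
      = if k = k₀ then C * c ^ k₀ * k₀.factorial else 0 := by
  refine extract_coeff hσ2 hψ hφ hint hval
    (g := fun k => if k = k₀ then C * c ^ k₀ * k₀.factorial else 0) (fun z => ?_) k
  have h0 : HasSum (fun k : ℕ => if k = k₀ then C * (c*z) ^ k₀ else 0) (C * (c*z) ^ k₀) :=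
    hasSum_ite_eq k₀ _
  refine h0.congr_fun fun k => ?_
  by_cases hk : k = k₀
  · subst hk
    show (if k = k then C * c ^ k * (k.factorial:ℝ) else 0) * z ^ k / k.factorial
      = if k = k then C * (c*z) ^ k else 0
    rw [if_pos rfl, if_pos rfl, mul_pow]
    have hfac : (k.factorial : ℝ) ≠ 0 := Nat.cast_ne_zero.mpr (Nat.factorial_ne_zero _)
    field_simp
  · show (if k = k₀ then C * c ^ k₀ * (k₀.factorial:ℝ) else 0) * z ^ k / k.factorial
      = if k = k₀ then C * (c*z) ^ k₀ else 0
    rw [if_neg hk, if_neg hk, zero_mul, zero_div]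

end Steps

section DimD

variable {d : ℕ} {τ : Fin d → ℝ} {u : Fin d → Fin d → ℝ} {σ2 : Fin d → ℝ}

def Yf (u : Fin d → Fin d → ℝ) (j : Fin d) (x : Fin d → ℝ) : ℝ := ∑ i, u j i * x i

lemma Yf_cont (u : Fin d → Fin d → ℝ) (j : Fin d) : Continuous (Yf u j) :=
  continuous_finset_sum _ fun i _ => continuous_const.mul (continuous_apply i)

lemma Yf_abs_le (u : Fin d → Fin d → ℝ) (j : Fin d) (x : Fin d → ℝ) :
    |Yf u j x| ≤ (∑ i, |u j i|) * ∑ i, |x i| := by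
  have h1 : |Yf u j x| ≤ ∑ i, |u j i| * |x i| := by
    refine (Finset.abs_sum_le_sum_abs _ _).trans (le_of_eq ?_)
    exact Finset.sum_congr rfl fun i _ => abs_mul _ _
  refine h1.trans ?_
  rw [Finset.sum_mul]
  refine Finset.sum_le_sum fun i _ => ?_
  refine mul_le_mul_of_nonneg_left ?_ (abs_nonneg _)
  exact Finset.single_le_sum (f := fun i' => |x i'|) (fun i' _ => abs_nonneg _)
    (Finset.mem_univ i)

lemma hint_master (hτ : ∀ i, 0 < τ i) (hσ2 : ∀ j, 0 < σ2 j)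
    (m n : Fin d → ℕ) (S₁ S₂ S₃ S₄ : Finset (Fin d)) (s t : Fin d → ℝ) (j₀ : Fin d)
    {r : ℝ} (hr : 0 ≤ r) :
    Integrable (fun x : Fin d → ℝ =>
      |wf τ x * ((∏ j ∈ S₁, Hexp (m j) (σ2 j) (Yf u j x))
        * (∏ j ∈ S₂, Hexp (n j) (σ2 j) (Yf u j x))
        * (∏ j ∈ S₃, Real.exp (Yf u j x * s j - σ2 j * s j ^ 2 / 2))
        * (∏ j ∈ S₄, Real.exp (Yf u j x * t j - σ2 j * t j ^ 2 / 2)))|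
      * Real.exp (|Yf u j₀ x| * r)) volume := by
  have hHb : ∀ (k : ℕ) (j : Fin d) (x : Fin d → ℝ),
      |Hexp k (σ2 j) (Yf u j x)| ≤ ((k.factorial : ℝ) * Real.exp (σ2 j / 2))
        * Real.exp ((∑ i, |u j i|) * ∑ i, |x i|) := by
    intro k j x
    refine (abs_Hexp_le k (hσ2 j).le _).trans ?_
    have h2 := Hexp_le k (σ2 := σ2 j) (hσ2 j).le (abs_nonneg (Yf u j x)) zero_le_one
    simp only [one_pow, mul_one] at h2
    rw [div_le_iff₀ (by positivity : (0:ℝ) < (k.factorial : ℝ))] at h2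
    calc Hexp k (-(σ2 j)) |Yf u j x| ≤ Real.exp (|Yf u j x| + σ2 j / 2) * k.factorial := h2
      _ = ((k.factorial : ℝ) * Real.exp (σ2 j / 2)) * Real.exp (|Yf u j x|) := by
          rw [Real.exp_add]; ring
      _ ≤ ((k.factorial : ℝ) * Real.exp (σ2 j / 2))
            * Real.exp ((∑ i, |u j i|) * ∑ i, |x i|) := by
          refine mul_le_mul_of_nonneg_left (Real.exp_le_exp.mpr (Yf_abs_le u j x)) ?_
          positivity
  have hEb : ∀ (j : Fin d) (c : ℝ) (x : Fin d → ℝ),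
      |Real.exp (Yf u j x * c - σ2 j * c ^ 2 / 2)|
        ≤ 1 * Real.exp ((|c| * ∑ i, |u j i|) * ∑ i, |x i|) := by
    intro j c x
    rw [abs_of_pos (Real.exp_pos _), one_mul]
    refine Real.exp_le_exp.mpr ?_
    have h1 : Yf u j x * c ≤ |Yf u j x| * |c| := by
      calc Yf u j x * c ≤ |Yf u j x * c| := le_abs_self _
        _ = |Yf u j x| * |c| := abs_mul _ _
    have h2 : |Yf u j x| * |c| ≤ ((∑ i, |u j i|) * ∑ i, |x i|) * |c| :=
      mul_le_mul_of_nonneg_right (Yf_abs_le u j x) (abs_nonneg c)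
    have h3 : 0 ≤ σ2 j * c ^ 2 / 2 := by
      have := (hσ2 j).le; positivity
    have h4 : ((∑ i, |u j i|) * ∑ i, |x i|) * |c| = (|c| * ∑ i, |u j i|) * ∑ i, |x i| := by ring
    linarith
  have hXb : ∀ x : Fin d → ℝ, |Real.exp (|Yf u j₀ x| * r)|
      ≤ 1 * Real.exp ((r * ∑ i, |u j₀ i|) * ∑ i, |x i|) := by
    intro x
    rw [abs_of_pos (Real.exp_pos _), one_mul]
    refine Real.exp_le_exp.mpr ?_
    have h2 : |Yf u j₀ x| * r ≤ ((∑ i, |u j₀ i|) * ∑ i, |x i|) * r :=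
      mul_le_mul_of_nonneg_right (Yf_abs_le u j₀ x) hr
    have h4 : ((∑ i, |u j₀ i|) * ∑ i, |x i|) * r = (r * ∑ i, |u j₀ i|) * ∑ i, |x i| := by ring
    linarith
  -- combined bound
  have hP1 := prodBound (β := Fin d → ℝ) S₁ (fun j x => Hexp (m j) (σ2 j) (Yf u j x))
    (fun j => (m j).factorial * Real.exp (σ2 j / 2)) (fun j => ∑ i, |u j i|)
    (Sg := fun x => ∑ i, |x i|) (fun j x => hHb (m j) j x)
  have hP2 := prodBound (β := Fin d → ℝ) S₂ (fun j x => Hexp (n j) (σ2 j) (Yf u j x))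
    (fun j => (n j).factorial * Real.exp (σ2 j / 2)) (fun j => ∑ i, |u j i|)
    (Sg := fun x => ∑ i, |x i|) (fun j x => hHb (n j) j x)
  have hP3 := prodBound (β := Fin d → ℝ) S₃
    (fun j x => Real.exp (Yf u j x * s j - σ2 j * s j ^ 2 / 2))
    (fun _ => 1) (fun j => |s j| * ∑ i, |u j i|)
    (Sg := fun x => ∑ i, |x i|) (fun j x => hEb j (s j) x)
  have hP4 := prodBound (β := Fin d → ℝ) S₄
    (fun j x => Real.exp (Yf u j x * t j - σ2 j * t j ^ 2 / 2))
    (fun _ => 1) (fun j => |t j| * ∑ i, |u j i|)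
    (Sg := fun x => ∑ i, |x i|) (fun j x => hEb j (t j) x)
  have htot := fun x => mul_bound (mul_bound (mul_bound (mul_bound hP1 hP2) hP3) hP4) hXb x
  set Ct : ℝ := (∏ j ∈ S₁, ((m j).factorial : ℝ) * Real.exp (σ2 j / 2))
    * (∏ j ∈ S₂, ((n j).factorial : ℝ) * Real.exp (σ2 j / 2))
    * (∏ _j ∈ S₃, (1:ℝ)) * (∏ _j ∈ S₄, (1:ℝ)) * 1 with hCt
  set Rt : ℝ := (∑ j ∈ S₁, ∑ i, |u j i|) + (∑ j ∈ S₂, ∑ i, |u j i|)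
    + (∑ j ∈ S₃, |s j| * ∑ i, |u j i|) + (∑ j ∈ S₄, |t j| * ∑ i, |u j i|)
    + r * ∑ i, |u j₀ i| with hRt
  have hRtnn : 0 ≤ Rt := by
    rw [hRt]
    have h1 : ∀ j : Fin d, (0:ℝ) ≤ ∑ i, |u j i| :=
      fun j => Finset.sum_nonneg fun i _ => abs_nonneg _
    have h2 : (0:ℝ) ≤ ∑ j ∈ S₁, ∑ i, |u j i| := Finset.sum_nonneg fun j _ => h1 j
    have h3 : (0:ℝ) ≤ ∑ j ∈ S₂, ∑ i, |u j i| := Finset.sum_nonneg fun j _ => h1 j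
    have h4 : (0:ℝ) ≤ ∑ j ∈ S₃, |s j| * ∑ i, |u j i| :=
      Finset.sum_nonneg fun j _ => mul_nonneg (abs_nonneg _) (h1 j)
    have h5 : (0:ℝ) ≤ ∑ j ∈ S₄, |t j| * ∑ i, |u j i| :=
      Finset.sum_nonneg fun j _ => mul_nonneg (abs_nonneg _) (h1 j)
    have h6 : (0:ℝ) ≤ r * ∑ i, |u j₀ i| := mul_nonneg hr (h1 j₀)
    linarith
  have hrestc : Continuous (fun x : Fin d → ℝ =>
      (∏ j ∈ S₁, Hexp (m j) (σ2 j) (Yf u j x))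
        * (∏ j ∈ S₂, Hexp (n j) (σ2 j) (Yf u j x))
        * (∏ j ∈ S₃, Real.exp (Yf u j x * s j - σ2 j * s j ^ 2 / 2))
        * (∏ j ∈ S₄, Real.exp (Yf u j x * t j - σ2 j * t j ^ 2 / 2))) := by
    apply Continuous.mul
    apply Continuous.mul
    apply Continuous.mul
    · exact continuous_finset_prod _ fun j _ =>
        (continuous_Hexp (m j) (σ2 j)).comp (Yf_cont u j)
    · exact continuous_finset_prod _ fun j _ =>
        (continuous_Hexp (n j) (σ2 j)).comp (Yf_cont u j)
    · exact continuous_finset_prod _ fun j _ => Real.continuous_exp.comp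
        (((Yf_cont u j).mul continuous_const).sub continuous_const)
    · exact continuous_finset_prod _ fun j _ => Real.continuous_exp.comp
        (((Yf_cont u j).mul continuous_const).sub continuous_const)
  have hg : Continuous (fun x : Fin d → ℝ =>
      |((∏ j ∈ S₁, Hexp (m j) (σ2 j) (Yf u j x))
        * (∏ j ∈ S₂, Hexp (n j) (σ2 j) (Yf u j x))
        * (∏ j ∈ S₃, Real.exp (Yf u j x * s j - σ2 j * s j ^ 2 / 2))
        * (∏ j ∈ S₄, Real.exp (Yf u j x * t j - σ2 j * t j ^ 2 / 2)))
        * Real.exp (|Yf u j₀ x| * r)|) :=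
    (hrestc.mul (Real.continuous_exp.comp ((Yf_cont u j₀).abs.mul continuous_const))).abs
  have hint0 := INT hτ (g := fun x =>
      |((∏ j ∈ S₁, Hexp (m j) (σ2 j) (Yf u j x))
        * (∏ j ∈ S₂, Hexp (n j) (σ2 j) (Yf u j x))
        * (∏ j ∈ S₃, Real.exp (Yf u j x * s j - σ2 j * s j ^ 2 / 2))
        * (∏ j ∈ S₄, Real.exp (Yf u j x * t j - σ2 j * t j ^ 2 / 2)))
        * Real.exp (|Yf u j₀ x| * r)|) Ct hg hRtnn (fun x => by
      rw [abs_abs]; exact htot x)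
  have habs_shuffle : ∀ (w0 r0 e0 : ℝ), 0 ≤ w0 → 0 < e0 →
      w0 * |r0 * e0| = |w0 * r0| * e0 := by
    intro w0 r0 e0 hw he
    rw [abs_mul, abs_mul, abs_of_nonneg hw, abs_of_pos he]
    ring
  refine hint0.congr (Filter.Eventually.of_forall fun x => ?_)
  exact habs_shuffle _ _ _ (wf_nonneg τ x) (Real.exp_pos _)

end DimD

lemma psi_cont {d : ℕ} (τ : Fin d → ℝ) (u : Fin d → Fin d → ℝ) (σ2 : Fin d → ℝ)
    (m n : Fin d → ℕ) (S₁ S₂ S₃ S₄ : Finset (Fin d)) (s t : Fin d → ℝ) :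
    Continuous (fun x : Fin d → ℝ =>
      wf τ x * ((∏ j ∈ S₁, Hexp (m j) (σ2 j) (Yf u j x))
        * (∏ j ∈ S₂, Hexp (n j) (σ2 j) (Yf u j x))
        * (∏ j ∈ S₃, Real.exp (Yf u j x * s j - σ2 j * s j ^ 2 / 2))
        * (∏ j ∈ S₄, Real.exp (Yf u j x * t j - σ2 j * t j ^ 2 / 2)))) := by
  apply (wf_cont τ).mul
  apply Continuous.mul
  apply Continuous.mul
  apply Continuous.mul
  · exact continuous_finset_prod _ fun j _ =>
      (continuous_Hexp (m j) (σ2 j)).comp (Yf_cont u j)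
  · exact continuous_finset_prod _ fun j _ =>
      (continuous_Hexp (n j) (σ2 j)).comp (Yf_cont u j)
  · exact continuous_finset_prod _ fun j _ => Real.continuous_exp.comp
      (((Yf_cont u j).mul continuous_const).sub continuous_const)
  · exact continuous_finset_prod _ fun j _ => Real.continuous_exp.comp
      (((Yf_cont u j).mul continuous_const).sub continuous_const)

end HermAux

open HermAux

/-- Orthogonality of the multivariate Hermite polynomials
`H_n(x;τ,u) = Π_j H_{n_j}(\hat x_j; |τ| a_j)` with `\hat x_j = Σ_i u_i^{(j)} x_i`,
with respect to the product of `N(0,τ_i)` distributions: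
`E[H_m H_n] = δ_{mn} |τ|^{|n|} Π_j a_j^{n_j} n_j!`. -/
theorem multivariate_hermite_orthogonality
    (d : ℕ) [NeZero d] (τ : Fin d → ℝ) (hτ : ∀ i, 0 < τ i)
    (a : Fin d → ℝ) (ha : ∀ j, 0 < a j)
    (u : Fin d → Fin d → ℝ) (hu0 : ∀ i, u 0 i = 1)
    (horth : ∀ k l, ∑ i, u k i * u l i * (τ i / ∑ i', τ i')
      = if k = l then a k else 0)
    -- the 1-dimensional Hermite polynomials `H m σ2 y`, generated by
    -- `exp(yz - σ² z²/2) = Σ_m H_m(y;σ²) z^m/m!`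
    (H : ℕ → ℝ → ℝ → ℝ)
    (hgen : ∀ (σ2 y z : ℝ),
      HasSum (fun m : ℕ => H m σ2 y * z ^ m / m.factorial)
        (Real.exp (y * z - σ2 * z ^ 2 / 2))) :
    ∀ m n : Fin d → ℕ,
      (∫ x : Fin d → ℝ,
          (∏ i, (Real.sqrt (2 * Real.pi * τ i))⁻¹
              * Real.exp (-(x i ^ 2) / (2 * τ i)))
            * ((∏ j, H (m j) ((∑ i', τ i') * a j) (∑ i, u j i * x i))
              * ∏ j, H (n j) ((∑ i', τ i') * a j) (∑ i, u j i * x i)))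
        = if m = n then
            (∑ i', τ i') ^ (∑ j, n j) * ∏ j, a j ^ n j * (n j).factorial
          else 0 := by
  intro m n
  classical
  set T : ℝ := ∑ i', τ i' with hTdef
  have hne : Nonempty (Fin d) := ⟨0⟩
  have hT : 0 < T := Finset.sum_pos (fun i _ => hτ i) Finset.univ_nonempty
  have hσ2pos : ∀ j, 0 < T * a j := fun j => mul_pos hT (ha j)
  -- orthogonality rescaled
  have horthσ : ∀ k l, ∑ i, u k i * u l i * τ i = if k = l then T * a k else 0 := by
    intro k l
    have h0 : ∑ i, u k i * u l i * τ i = T * ∑ i, u k i * u l i * (τ i / T) := by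
      rw [Finset.mul_sum]
      refine Finset.sum_congr rfl fun i _ => ?_
      field_simp
    rw [h0, horth k l]
    split_ifs with h
    · rfl
    · exact mul_zero T
  -- Phase 1 induction
  have P1 : ∀ S : Finset (Fin d), ∀ s t : Fin d → ℝ,
      (∫ x : Fin d → ℝ, wf τ x * ((∏ j ∈ S, Hexp (m j) (T * a j) (Yf u j x))
        * (∏ j ∈ (∅ : Finset (Fin d)), Hexp (n j) (T * a j) (Yf u j x))
        * (∏ j ∈ Sᶜ, Real.exp (Yf u j x * s j - T * a j * s j ^ 2 / 2))
        * (∏ j ∈ (Finset.univ : Finset (Fin d)),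
            Real.exp (Yf u j x * t j - T * a j * t j ^ 2 / 2))))
      = (∏ j ∈ S, (T * a j * t j) ^ m j)
        * ∏ j ∈ Sᶜ, Real.exp (T * a j * (s j * t j)) := by
    intro S
    induction S using Finset.induction_on with
    | empty =>
      intro s t
      simp only [Finset.prod_empty, Finset.compl_empty, one_mul]
      have hcc : ∀ x : Fin d → ℝ,
          (∏ j, Real.exp (Yf u j x * s j - T * a j * s j ^ 2 / 2))
            * ∏ j, Real.exp (Yf u j x * t j - T * a j * t j ^ 2 / 2)
          = Real.exp (-(∑ j, (T * a j * s j ^ 2 / 2 + T * a j * t j ^ 2 / 2)))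
            * Real.exp (∑ i, (∑ j, (s j + t j) * u j i) * x i) := by
        intro x
        rw [← Real.exp_sum, ← Real.exp_sum, ← Real.exp_add, ← Real.exp_add]
        congr 1
        have hswap : ∑ j, Yf u j x * s j + ∑ j, Yf u j x * t j
            = ∑ i, (∑ j, (s j + t j) * u j i) * x i := by
          rw [← Finset.sum_add_distrib]
          calc ∑ j, (Yf u j x * s j + Yf u j x * t j)
              = ∑ j, ∑ i, (s j + t j) * u j i * x i := by
                refine Finset.sum_congr rfl fun j _ => ?_
                show (∑ i, u j i * x i) * s j + (∑ i, u j i * x i) * t j = _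
                rw [Finset.sum_mul, Finset.sum_mul, ← Finset.sum_add_distrib]
                exact Finset.sum_congr rfl fun i _ => by ring
            _ = ∑ i, ∑ j, (s j + t j) * u j i * x i := Finset.sum_comm
            _ = ∑ i, (∑ j, (s j + t j) * u j i) * x i := by
                exact Finset.sum_congr rfl fun i _ => (Finset.sum_mul _ _ _).symm
        have e1 : ∑ j, (Yf u j x * s j - T * a j * s j ^ 2 / 2)
            = ∑ j, Yf u j x * s j - ∑ j, T * a j * s j ^ 2 / 2 :=
          Finset.sum_sub_distrib _ _
        have e2 : ∑ j, (Yf u j x * t j - T * a j * t j ^ 2 / 2)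
            = ∑ j, Yf u j x * t j - ∑ j, T * a j * t j ^ 2 / 2 :=
          Finset.sum_sub_distrib _ _
        have e3 : ∑ j, (T * a j * s j ^ 2 / 2 + T * a j * t j ^ 2 / 2)
            = ∑ j, T * a j * s j ^ 2 / 2 + ∑ j, T * a j * t j ^ 2 / 2 :=
          Finset.sum_add_distrib
        linarith
      have hQ : ∑ i, (∑ j, (s j + t j) * u j i) ^ 2 * τ i / 2
          = ∑ j, T * a j * (s j + t j) ^ 2 / 2 := by
        calc ∑ i, (∑ j, (s j + t j) * u j i) ^ 2 * τ i / 2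
            = ∑ i, ∑ j, ∑ l, ((s j + t j) * u j i) * ((s l + t l) * u l i) * τ i / 2 := by
              refine Finset.sum_congr rfl fun i _ => ?_
              rw [sq, Finset.sum_mul_sum]
              rw [Finset.sum_mul, Finset.sum_div]
              refine Finset.sum_congr rfl fun j _ => ?_
              rw [Finset.sum_mul, Finset.sum_div]
          _ = ∑ j, ∑ l, ∑ i, ((s j + t j) * u j i) * ((s l + t l) * u l i) * τ i / 2 := by
              rw [Finset.sum_comm]
              exact Finset.sum_congr rfl fun j _ => Finset.sum_comm
          _ = ∑ j, ∑ l, (s j + t j) * (s l + t l) / 2 * ∑ i, u j i * u l i * τ i := by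
              refine Finset.sum_congr rfl fun j _ => Finset.sum_congr rfl fun l _ => ?_
              rw [Finset.mul_sum]
              exact Finset.sum_congr rfl fun i _ => by ring
          _ = ∑ j, ∑ l, (s j + t j) * (s l + t l) / 2 * (if j = l then T * a j else 0) := by
              refine Finset.sum_congr rfl fun j _ => Finset.sum_congr rfl fun l _ => ?_
              rw [horthσ j l]
          _ = ∑ j, T * a j * (s j + t j) ^ 2 / 2 := by
              refine Finset.sum_congr rfl fun j _ => ?_
              simp only [mul_ite, mul_zero]
              rw [Finset.sum_ite_eq univ j
                (fun l => (s j + t j) * (s l + t l) / 2 * (T * a j))]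
              rw [if_pos (Finset.mem_univ j)]
              ring
      rw [show (fun x : Fin d → ℝ => wf τ x
          * ((∏ j, Real.exp (Yf u j x * s j - T * a j * s j ^ 2 / 2))
            * ∏ j, Real.exp (Yf u j x * t j - T * a j * t j ^ 2 / 2)))
          = fun x => Real.exp (-(∑ j, (T * a j * s j ^ 2 / 2 + T * a j * t j ^ 2 / 2)))
            * (wf τ x * Real.exp (∑ i, (∑ j, (s j + t j) * u j i) * x i)) from
        funext fun x => by beta_reduce; rw [hcc x]; ring]
      rw [MeasureTheory.integral_const_mul, GaussInt hτ, hQ, ← Real.exp_sum,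
        ← Real.exp_add, neg_add_eq_sub, ← Finset.sum_sub_distrib]
      exact congrArg Real.exp (Finset.sum_congr rfl fun j _ => by ring)
    | @insert j₀ S hj₀ IH =>
      intro s t
      have hj₀c : j₀ ∈ Sᶜ := Finset.mem_compl.mpr hj₀
      set C : ℝ := (∏ j ∈ S, (T * a j * t j) ^ m j)
        * ∏ j ∈ Sᶜ.erase j₀, Real.exp (T * a j * (s j * t j)) with hC
      have hval : ∀ z : ℝ, (∫ x : Fin d → ℝ,
          (wf τ x * ((∏ j ∈ S, Hexp (m j) (T * a j) (Yf u j x))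
            * (∏ j ∈ (∅ : Finset (Fin d)), Hexp (n j) (T * a j) (Yf u j x))
            * (∏ j ∈ (insert j₀ S)ᶜ, Real.exp (Yf u j x * s j - T * a j * s j ^ 2 / 2))
            * (∏ j ∈ (Finset.univ : Finset (Fin d)),
                Real.exp (Yf u j x * t j - T * a j * t j ^ 2 / 2))))
          * Real.exp (Yf u j₀ x * z - T * a j₀ * z ^ 2 / 2))
          = C * Real.exp (T * a j₀ * t j₀ * z) := by
        intro z
        have hsplit : ∀ x : Fin d → ℝ, ∏ j ∈ Sᶜ, Real.exp (Yf u j x * Function.update s j₀ z j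
            - T * a j * Function.update s j₀ z j ^ 2 / 2)
            = Real.exp (Yf u j₀ x * z - T * a j₀ * z ^ 2 / 2)
              * ∏ j ∈ Sᶜ.erase j₀, Real.exp (Yf u j x * s j - T * a j * s j ^ 2 / 2) := by
          intro x
          rw [← Finset.mul_prod_erase _ _ hj₀c, Function.update_self]
          congr 1
          refine Finset.prod_congr rfl fun j hj => ?_
          rw [Function.update_of_ne (Finset.ne_of_mem_erase hj)]
        calc (∫ x : Fin d → ℝ,
            (wf τ x * ((∏ j ∈ S, Hexp (m j) (T * a j) (Yf u j x))
              * (∏ j ∈ (∅ : Finset (Fin d)), Hexp (n j) (T * a j) (Yf u j x))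
              * (∏ j ∈ (insert j₀ S)ᶜ, Real.exp (Yf u j x * s j - T * a j * s j ^ 2 / 2))
              * (∏ j ∈ (Finset.univ : Finset (Fin d)),
                  Real.exp (Yf u j x * t j - T * a j * t j ^ 2 / 2))))
            * Real.exp (Yf u j₀ x * z - T * a j₀ * z ^ 2 / 2))
            = ∫ x : Fin d → ℝ, wf τ x * ((∏ j ∈ S, Hexp (m j) (T * a j) (Yf u j x))
              * (∏ j ∈ (∅ : Finset (Fin d)), Hexp (n j) (T * a j) (Yf u j x))
              * (∏ j ∈ Sᶜ, Real.exp (Yf u j x * Function.update s j₀ z j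
                  - T * a j * Function.update s j₀ z j ^ 2 / 2))
              * (∏ j ∈ (Finset.univ : Finset (Fin d)),
                  Real.exp (Yf u j x * t j - T * a j * t j ^ 2 / 2))) := by
              refine integral_congr_ae (Filter.Eventually.of_forall fun x => ?_)
              beta_reduce
              rw [hsplit x, Finset.compl_insert]
              ring
          _ = (∏ j ∈ S, (T * a j * t j) ^ m j)
              * ∏ j ∈ Sᶜ, Real.exp (T * a j * (Function.update s j₀ z j * t j)) :=
              IH (Function.update s j₀ z) t
          _ = C * Real.exp (T * a j₀ * t j₀ * z) := by
              rw [← Finset.mul_prod_erase _ _ hj₀c, Function.update_self]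
              have herase : ∏ j ∈ Sᶜ.erase j₀,
                  Real.exp (T * a j * (Function.update s j₀ z j * t j))
                  = ∏ j ∈ Sᶜ.erase j₀, Real.exp (T * a j * (s j * t j)) :=
                Finset.prod_congr rfl fun j hj => by
                  rw [Function.update_of_ne (Finset.ne_of_mem_erase hj)]
              rw [herase, hC]
              have h2 : T * a j₀ * (z * t j₀) = T * a j₀ * t j₀ * z := by ring
              rw [h2]
              ring
      have key := step_exp (μ := volume)
        (ψ := fun x : Fin d → ℝ => wf τ x * ((∏ j ∈ S, Hexp (m j) (T * a j) (Yf u j x))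
          * (∏ j ∈ (∅ : Finset (Fin d)), Hexp (n j) (T * a j) (Yf u j x))
          * (∏ j ∈ (insert j₀ S)ᶜ, Real.exp (Yf u j x * s j - T * a j * s j ^ 2 / 2))
          * (∏ j ∈ (Finset.univ : Finset (Fin d)),
              Real.exp (Yf u j x * t j - T * a j * t j ^ 2 / 2))))
        (φ := Yf u j₀) (hσ2pos j₀).le
        ((psi_cont τ u (fun j => T * a j) m n S ∅ ((insert j₀ S)ᶜ) Finset.univ
          s t).aestronglyMeasurable)
        ((Yf_cont u j₀).aestronglyMeasurable)
        (fun r hr => hint_master hτ hσ2pos m n S ∅ ((insert j₀ S)ᶜ) Finset.univ s t j₀ hr)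
        C (T * a j₀ * t j₀) hval (m j₀)
      have key' : (∫ x : Fin d → ℝ,
          wf τ x * ((∏ j ∈ S, Hexp (m j) (T * a j) (Yf u j x))
            * (∏ j ∈ (∅ : Finset (Fin d)), Hexp (n j) (T * a j) (Yf u j x))
            * (∏ j ∈ (insert j₀ S)ᶜ, Real.exp (Yf u j x * s j - T * a j * s j ^ 2 / 2))
            * (∏ j ∈ (Finset.univ : Finset (Fin d)),
                Real.exp (Yf u j x * t j - T * a j * t j ^ 2 / 2)))
          * Hexp (m j₀) (T * a j₀) (Yf u j₀ x))
          = C * (T * a j₀ * t j₀) ^ m j₀ := key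
      rw [show (fun x : Fin d → ℝ => wf τ x
          * ((∏ j ∈ insert j₀ S, Hexp (m j) (T * a j) (Yf u j x))
            * (∏ j ∈ (∅ : Finset (Fin d)), Hexp (n j) (T * a j) (Yf u j x))
            * (∏ j ∈ (insert j₀ S)ᶜ, Real.exp (Yf u j x * s j - T * a j * s j ^ 2 / 2))
            * (∏ j ∈ (Finset.univ : Finset (Fin d)),
                Real.exp (Yf u j x * t j - T * a j * t j ^ 2 / 2))))
          = fun x : Fin d → ℝ => wf τ x * ((∏ j ∈ S, Hexp (m j) (T * a j) (Yf u j x))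
            * (∏ j ∈ (∅ : Finset (Fin d)), Hexp (n j) (T * a j) (Yf u j x))
            * (∏ j ∈ (insert j₀ S)ᶜ, Real.exp (Yf u j x * s j - T * a j * s j ^ 2 / 2))
            * (∏ j ∈ (Finset.univ : Finset (Fin d)),
                Real.exp (Yf u j x * t j - T * a j * t j ^ 2 / 2)))
            * Hexp (m j₀) (T * a j₀) (Yf u j₀ x) from
        funext fun x => by beta_reduce; rw [Finset.prod_insert hj₀]; ring]
      rw [key', Finset.prod_insert hj₀, Finset.compl_insert, hC]
      ring
  -- Phase 2 induction
  have P2 : ∀ Tf : Finset (Fin d), ∀ t : Fin d → ℝ,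
      (∫ x : Fin d → ℝ, wf τ x
        * ((∏ j ∈ (Finset.univ : Finset (Fin d)), Hexp (m j) (T * a j) (Yf u j x))
        * (∏ j ∈ Tf, Hexp (n j) (T * a j) (Yf u j x))
        * (∏ j ∈ (∅ : Finset (Fin d)),
            Real.exp (Yf u j x * (0:ℝ) - T * a j * (0:ℝ) ^ 2 / 2))
        * (∏ j ∈ Tfᶜ, Real.exp (Yf u j x * t j - T * a j * t j ^ 2 / 2))))
      = (∏ j ∈ Tf, if m j = n j then (T * a j) ^ n j * ((n j).factorial : ℝ) else 0)
        * ∏ j ∈ Tfᶜ, (T * a j * t j) ^ m j := by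
    intro Tf
    induction Tf using Finset.induction_on with
    | empty =>
      intro t
      have h := P1 Finset.univ (fun _ => (0:ℝ)) t
      simp only [Finset.compl_univ, Finset.compl_empty, Finset.prod_empty, mul_one,
        one_mul] at h ⊢
      exact h
    | @insert j₀ Tf hj₀ IH =>
      intro t
      have hj₀c : j₀ ∈ Tfᶜ := Finset.mem_compl.mpr hj₀
      set C : ℝ := (∏ j ∈ Tf, if m j = n j then (T * a j) ^ n j * ((n j).factorial : ℝ) else 0)
        * ∏ j ∈ Tfᶜ.erase j₀, (T * a j * t j) ^ m j with hC
      have hval : ∀ z : ℝ, (∫ x : Fin d → ℝ,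
          (wf τ x * ((∏ j ∈ (Finset.univ : Finset (Fin d)), Hexp (m j) (T * a j) (Yf u j x))
            * (∏ j ∈ Tf, Hexp (n j) (T * a j) (Yf u j x))
            * (∏ j ∈ (∅ : Finset (Fin d)),
                Real.exp (Yf u j x * (0:ℝ) - T * a j * (0:ℝ) ^ 2 / 2))
            * (∏ j ∈ (insert j₀ Tf)ᶜ, Real.exp (Yf u j x * t j - T * a j * t j ^ 2 / 2))))
          * Real.exp (Yf u j₀ x * z - T * a j₀ * z ^ 2 / 2))
          = C * (T * a j₀ * z) ^ m j₀ := by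
        intro z
        have hsplit : ∀ x : Fin d → ℝ,
            ∏ j ∈ Tfᶜ, Real.exp (Yf u j x * Function.update t j₀ z j
              - T * a j * Function.update t j₀ z j ^ 2 / 2)
            = Real.exp (Yf u j₀ x * z - T * a j₀ * z ^ 2 / 2)
              * ∏ j ∈ Tfᶜ.erase j₀, Real.exp (Yf u j x * t j - T * a j * t j ^ 2 / 2) := by
          intro x
          rw [← Finset.mul_prod_erase _ _ hj₀c, Function.update_self]
          congr 1
          refine Finset.prod_congr rfl fun j hj => ?_
          rw [Function.update_of_ne (Finset.ne_of_mem_erase hj)]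
        calc (∫ x : Fin d → ℝ,
            (wf τ x * ((∏ j ∈ (Finset.univ : Finset (Fin d)), Hexp (m j) (T * a j) (Yf u j x))
              * (∏ j ∈ Tf, Hexp (n j) (T * a j) (Yf u j x))
              * (∏ j ∈ (∅ : Finset (Fin d)),
                  Real.exp (Yf u j x * (0:ℝ) - T * a j * (0:ℝ) ^ 2 / 2))
              * (∏ j ∈ (insert j₀ Tf)ᶜ,
                  Real.exp (Yf u j x * t j - T * a j * t j ^ 2 / 2))))
            * Real.exp (Yf u j₀ x * z - T * a j₀ * z ^ 2 / 2))
            = ∫ x : Fin d → ℝ, wf τ x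
              * ((∏ j ∈ (Finset.univ : Finset (Fin d)), Hexp (m j) (T * a j) (Yf u j x))
              * (∏ j ∈ Tf, Hexp (n j) (T * a j) (Yf u j x))
              * (∏ j ∈ (∅ : Finset (Fin d)),
                  Real.exp (Yf u j x * (0:ℝ) - T * a j * (0:ℝ) ^ 2 / 2))
              * (∏ j ∈ Tfᶜ, Real.exp (Yf u j x * Function.update t j₀ z j
                  - T * a j * Function.update t j₀ z j ^ 2 / 2))) := by
              refine integral_congr_ae (Filter.Eventually.of_forall fun x => ?_)
              beta_reduce
              rw [hsplit x, Finset.compl_insert]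
              ring
          _ = (∏ j ∈ Tf, if m j = n j then (T * a j) ^ n j * ((n j).factorial : ℝ) else 0)
              * ∏ j ∈ Tfᶜ, (T * a j * Function.update t j₀ z j) ^ m j :=
              IH (Function.update t j₀ z)
          _ = C * (T * a j₀ * z) ^ m j₀ := by
              rw [← Finset.mul_prod_erase _ _ hj₀c, Function.update_self]
              have herase : ∏ j ∈ Tfᶜ.erase j₀, (T * a j * Function.update t j₀ z j) ^ m j
                  = ∏ j ∈ Tfᶜ.erase j₀, (T * a j * t j) ^ m j :=
                Finset.prod_congr rfl fun j hj => by
                  rw [Function.update_of_ne (Finset.ne_of_mem_erase hj)]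
              rw [herase, hC]
              ring
      have key := step_mono (μ := volume)
        (ψ := fun x : Fin d → ℝ => wf τ x
          * ((∏ j ∈ (Finset.univ : Finset (Fin d)), Hexp (m j) (T * a j) (Yf u j x))
          * (∏ j ∈ Tf, Hexp (n j) (T * a j) (Yf u j x))
          * (∏ j ∈ (∅ : Finset (Fin d)),
              Real.exp (Yf u j x * (0:ℝ) - T * a j * (0:ℝ) ^ 2 / 2))
          * (∏ j ∈ (insert j₀ Tf)ᶜ, Real.exp (Yf u j x * t j - T * a j * t j ^ 2 / 2))))
        (φ := Yf u j₀) (hσ2pos j₀).le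
        ((psi_cont τ u (fun j => T * a j) m n Finset.univ Tf ∅ ((insert j₀ Tf)ᶜ)
          (fun _ => (0:ℝ)) t).aestronglyMeasurable)
        ((Yf_cont u j₀).aestronglyMeasurable)
        (fun r hr => hint_master hτ hσ2pos m n Finset.univ Tf ∅ ((insert j₀ Tf)ᶜ)
          (fun _ => (0:ℝ)) t j₀ hr)
        C (T * a j₀) (m j₀) hval (n j₀)
      have key' : (∫ x : Fin d → ℝ,
          wf τ x * ((∏ j ∈ (Finset.univ : Finset (Fin d)), Hexp (m j) (T * a j) (Yf u j x))
            * (∏ j ∈ Tf, Hexp (n j) (T * a j) (Yf u j x))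
            * (∏ j ∈ (∅ : Finset (Fin d)),
                Real.exp (Yf u j x * (0:ℝ) - T * a j * (0:ℝ) ^ 2 / 2))
            * (∏ j ∈ (insert j₀ Tf)ᶜ, Real.exp (Yf u j x * t j - T * a j * t j ^ 2 / 2)))
          * Hexp (n j₀) (T * a j₀) (Yf u j₀ x))
          = if n j₀ = m j₀ then C * (T * a j₀) ^ m j₀ * (m j₀).factorial else 0 := key
      rw [show (fun x : Fin d → ℝ => wf τ x
          * ((∏ j ∈ (Finset.univ : Finset (Fin d)), Hexp (m j) (T * a j) (Yf u j x))
            * (∏ j ∈ insert j₀ Tf, Hexp (n j) (T * a j) (Yf u j x))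
            * (∏ j ∈ (∅ : Finset (Fin d)),
                Real.exp (Yf u j x * (0:ℝ) - T * a j * (0:ℝ) ^ 2 / 2))
            * (∏ j ∈ (insert j₀ Tf)ᶜ,
                Real.exp (Yf u j x * t j - T * a j * t j ^ 2 / 2))))
          = fun x : Fin d → ℝ => wf τ x
          * ((∏ j ∈ (Finset.univ : Finset (Fin d)), Hexp (m j) (T * a j) (Yf u j x))
            * (∏ j ∈ Tf, Hexp (n j) (T * a j) (Yf u j x))
            * (∏ j ∈ (∅ : Finset (Fin d)),
                Real.exp (Yf u j x * (0:ℝ) - T * a j * (0:ℝ) ^ 2 / 2))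
            * (∏ j ∈ (insert j₀ Tf)ᶜ, Real.exp (Yf u j x * t j - T * a j * t j ^ 2 / 2)))
            * Hexp (n j₀) (T * a j₀) (Yf u j₀ x) from
        funext fun x => by beta_reduce; rw [Finset.prod_insert hj₀]; ring]
      rw [key', Finset.prod_insert hj₀, Finset.compl_insert, hC]
      by_cases hmn : m j₀ = n j₀
      · rw [if_pos hmn.symm, if_pos hmn, ← hmn]
        ring
      · rw [if_neg (fun h => hmn h.symm), if_neg hmn]
        rw [zero_mul, zero_mul]
  -- final assembly
  have hfinal := P2 Finset.univ (fun _ => (0:ℝ))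
  simp only [Finset.compl_univ, Finset.prod_empty, mul_one] at hfinal
  rw [show (fun x : Fin d → ℝ =>
      (∏ i, (Real.sqrt (2 * Real.pi * τ i))⁻¹ * Real.exp (-(x i ^ 2) / (2 * τ i)))
        * ((∏ j, H (m j) (T * a j) (∑ i, u j i * x i))
          * ∏ j, H (n j) (T * a j) (∑ i, u j i * x i)))
      = fun x : Fin d → ℝ => wf τ x * ((∏ j, Hexp (m j) (T * a j) (Yf u j x))
          * ∏ j, Hexp (n j) (T * a j) (Yf u j x)) from
    funext fun x => by simp only [H_eq_Hexp hgen]; rfl]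
  rw [hfinal]
  by_cases hmn : m = n
  · subst hmn
    rw [if_pos rfl]
    calc ∏ j, (if m j = m j then (T * a j) ^ m j * ((m j).factorial : ℝ) else 0)
        = ∏ j, (T ^ m j * (a j ^ m j * ((m j).factorial : ℝ))) := by
          refine Finset.prod_congr rfl fun j _ => ?_
          rw [if_pos rfl, mul_pow]
          ring
      _ = (∏ j, T ^ m j) * ∏ j, (a j ^ m j * ((m j).factorial : ℝ)) :=
          Finset.prod_mul_distrib
      _ = T ^ (∑ j, m j) * ∏ j, a j ^ m j * ((m j).factorial : ℝ) := by
          rw [Finset.prod_pow_eq_pow_sum]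
  · rw [if_neg hmn]
    have hex : ∃ j, m j ≠ n j := by
      by_contra hcon
      push_neg at hcon
      exact hmn (funext hcon)
    obtain ⟨j, hj⟩ := hex
    exact Finset.prod_eq_zero (Finset.mem_univ j) (if_neg hj)
end
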